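/- arXiv:1606.09018 — 3 statements merged into one kernel-verified Lean document; each statement's English description precedes it below -/
import Mathlib

section
/- For every poset P, the interval monoid Int(P) embeds into its enveloping group; in particular Int(P) is cancellative and 1 is its only invertible element. -/
/-! Common definitions: multifractions, divisibility, interval monoids, zigzags. -/

section Defs

variable {M : Type*}

/-- A multifraction on a monoid `M`: a finite sequence with entries alternately in `M`
(sign `true`) and in a formal disjoint copy of `M` (sign `false`). -/
structure Multifraction (M : Type*) [Monoid M] where
  entries : List (Bool × M)
  alt : entries.Chain' fun p q => p.1 ≠ q.1

/-- The product of two multifraction entry lists: merge the adjacent entries when they have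
the same sign, concatenate otherwise. -/
def mfMul [Monoid M] (l₁ l₂ : List (Bool × M)) : List (Bool × M) :=
  match l₁.getLast?, l₂ with
  | some (b, x), (c, y) :: t =>
      if b = c then l₁.dropLast ++ (b, if b then x * y else y * x) :: t else l₁ ++ l₂
  | _, _ => l₁ ++ l₂

/-- The one-entry positive multifraction. -/
def mfPos [Monoid M] (x : M) : Multifraction M := ⟨[(true, x)], List.isChain_singleton _⟩

/-- The one-entry negative multifraction. -/
def mfNeg [Monoid M] (x : M) : Multifraction M := ⟨[(false, x)], List.isChain_singleton _⟩

/-- `a` left divides `b`. -/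
def LDvd [Monoid M] (a b : M) : Prop := ∃ c, a * c = b

/-- `a` right divides `b`. -/
def RDvd [Monoid M] (a b : M) : Prop := ∃ c, c * a = b

/-- `M` is (left and right) cancellative. -/
def Cancellative (M : Type*) [Monoid M] : Prop :=
  (∀ a b c : M, a * b = a * c → b = c) ∧ (∀ a b c : M, b * a = c * a → b = c)

/-- `1` is the only invertible element of `M`. -/
def TrivialUnits (M : Type*) [Monoid M] : Prop := ∀ a : M, IsUnit a → a = 1

/-- Any two elements admit a left gcd. -/
def HasLeftGcds (M : Type*) [Monoid M] : Prop :=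
  ∀ a b : M, ∃ d, LDvd d a ∧ LDvd d b ∧ ∀ e, LDvd e a → LDvd e b → LDvd e d

/-- Any two elements admit a right gcd. -/
def HasRightGcds (M : Type*) [Monoid M] : Prop :=
  ∀ a b : M, ∃ d, RDvd d a ∧ RDvd d b ∧ ∀ e, RDvd e a → RDvd e b → RDvd e d

/-- `M` is a gcd-monoid. -/
def GcdMonoidProp (M : Type*) [Monoid M] : Prop :=
  Cancellative M ∧ TrivialUnits M ∧ HasLeftGcds M ∧ HasRightGcds M

/-- `m` is a right lcm of `u` and `v`. -/
def IsRightLcm [Monoid M] (u v m : M) : Prop :=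
  LDvd u m ∧ LDvd v m ∧ ∀ w, LDvd u w → LDvd v w → LDvd m w

/-- `m` is a left lcm of `u` and `v`. -/
def IsLeftLcm [Monoid M] (u v m : M) : Prop :=
  RDvd u m ∧ RDvd v m ∧ ∀ w, RDvd u w → RDvd v w → RDvd m w

/-- `M` is a noetherian monoid: cancellative, with trivial units, and with well-founded
proper left and right divisibility. -/
def NoetherianMonoid (M : Type*) [Monoid M] : Prop :=
  Cancellative M ∧ TrivialUnits M ∧
    WellFounded (fun a b : M => LDvd a b ∧ a ≠ b) ∧
    WellFounded (fun a b : M => RDvd a b ∧ a ≠ b)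

/-- An atom of a monoid. -/
def MonAtom [Monoid M] (a : M) : Prop :=
  a ≠ 1 ∧ ∀ b c : M, a = b * c → b = 1 ∨ c = 1

/-- `η : M →* G` exhibits `G` as the enveloping (universal) group of `M`. -/
def IsEnvelopingGroup (M : Type*) [Monoid M] (G : Type*) [Group G] (η : M →* G) : Prop :=
  ∀ (H : Type*) [Group H] (f : M →* H), ∃! g : G →* H, g.comp η = f

/-- Evaluation of a multifraction in a group `G` through `η : M →* G`. -/
def mfEval [Monoid M] {G : Type*} [Group G] (η : M →* G) (a : Multifraction M) : G :=
  (a.entries.map fun p => if p.1 then η p.2 else (η p.2)⁻¹).prod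

/-- A multifraction is trivial if all its entries equal `1`. -/
def MfTrivial [Monoid M] (a : Multifraction M) : Prop := ∀ p ∈ a.entries, p.2 = 1

/-- `a` is a proper piece of `b` (relative to a monoid structure on multifractions). -/
def Piece [Monoid M] [Monoid (Multifraction M)] (a b : Multifraction M) : Prop :=
  ∃ c d : Multifraction M, b = c * a * d ∧ ¬(MfTrivial c ∧ MfTrivial d)

/-- The `j`-th entry of a multifraction (with default `(true, 1)`). -/
def mfEntry [Monoid M] (a : Multifraction M) (j : ℕ) : Bool × M :=
  (a.entries[j]?).getD (true, 1)

/-- The reduction rule `R_{i,x}` (here `j = i - 1` is the 0-based level):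
`b = a • R_{i,x}`. -/
def RedAt [Monoid M] (a b : Multifraction M) (j : ℕ) (x : M) : Prop :=
  b.entries.length = a.entries.length ∧ j + 1 < a.entries.length ∧
  (∀ k, ¬(j - 1 ≤ k ∧ k ≤ j + 1) → b.entries[k]? = a.entries[k]?) ∧
  (∀ k, (mfEntry b k).1 = (mfEntry a k).1) ∧
  (if (mfEntry a j).1 then
     if j = 0 then
       (mfEntry b 0).2 * x = (mfEntry a 0).2 ∧ (mfEntry b 1).2 * x = (mfEntry a 1).2
     else ∃ x' : M,
       (mfEntry b (j - 1)).2 = x' * (mfEntry a (j - 1)).2 ∧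
       (mfEntry b j).2 * x = x' * (mfEntry a j).2 ∧
       IsLeftLcm x (mfEntry a j).2 ((mfEntry b j).2 * x) ∧
       (mfEntry b (j + 1)).2 * x = (mfEntry a (j + 1)).2
   else
     if j = 0 then
       x * (mfEntry b 0).2 = (mfEntry a 0).2 ∧ x * (mfEntry b 1).2 = (mfEntry a 1).2
     else ∃ x' : M,
       (mfEntry b (j - 1)).2 = (mfEntry a (j - 1)).2 * x' ∧
       x * (mfEntry b j).2 = (mfEntry a j).2 * x' ∧
       IsRightLcm x (mfEntry a j).2 (x * (mfEntry b j).2) ∧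
       x * (mfEntry b (j + 1)).2 = (mfEntry a (j + 1)).2)

/-- One reduction step. -/
def Reduces [Monoid M] (a b : Multifraction M) : Prop := ∃ j x, x ≠ 1 ∧ RedAt a b j x

/-- A multifraction is reducible if some rule `R_{i,x}` with `x ≠ 1` applies to it. -/
def Reducible [Monoid M] (a : Multifraction M) : Prop := ∃ b, Reduces a b

/-- Iterated reduction. -/
def ReducesStar [Monoid M] : Multifraction M → Multifraction M → Prop :=
  Relation.ReflTransGen Reduces

/-- Semi-convergence of reduction (relative to an enveloping group `η : M →* G`):
every unital multifraction reduces to a trivial one. -/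
def SemiConvergent [Monoid M] {G : Type*} [Group G] (η : M →* G) : Prop :=
  ∀ a : Multifraction M, mfEval η a = 1 → ∃ b, ReducesStar a b ∧ MfTrivial b

end Defs

section Interval

variable (P : Type*) [PartialOrder P]

/-- The intervals of a poset `P`. -/
def Iv := {p : P × P // p.1 ≤ p.2}

/-- The defining relations of the interval monoid of `P`. -/
def intervalRel : FreeMonoid (Iv P) → FreeMonoid (Iv P) → Prop := fun u v =>
  (∃ (x y z : P) (hxy : x ≤ y) (hyz : y ≤ z),
      u = FreeMonoid.of ⟨(x, z), hxy.trans hyz⟩ ∧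
      v = FreeMonoid.of ⟨(x, y), hxy⟩ * FreeMonoid.of ⟨(y, z), hyz⟩) ∨
  (∃ x : P, u = FreeMonoid.of ⟨(x, x), le_refl x⟩ ∧ v = 1)

/-- The interval monoid of the poset `P`. -/
def IntervalMonoid := (conGen (intervalRel P)).Quotient

instance : Monoid (IntervalMonoid P) :=
  inferInstanceAs (Monoid (conGen (intervalRel P)).Quotient)

variable {P}

/-- The generator `[x, y]` of the interval monoid. -/
def intv (I : Iv P) : IntervalMonoid P := (conGen (intervalRel P)).mk' (FreeMonoid.of I)

variable (P)

/-- `P` is a local lattice: each `P^{≥ x}` is a meet-semilattice and each `P^{≤ x}` is a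
join-semilattice. -/
def LocalLattice : Prop :=
  (∀ x a b : P, x ≤ a → x ≤ b →
      ∃ m, x ≤ m ∧ m ≤ a ∧ m ≤ b ∧ ∀ c, x ≤ c → c ≤ a → c ≤ b → c ≤ m) ∧
  (∀ x a b : P, a ≤ x → b ≤ x →
      ∃ m, m ≤ x ∧ a ≤ m ∧ b ≤ m ∧ ∀ c, c ≤ x → a ≤ c → b ≤ c → m ≤ c)

/-- Noetherianity conditions on the poset `P`: no infinite descending chain in any `P^{≥ x}`
and no infinite ascending chain in any `P^{≤ x}`. -/
def PosetNoethCond : Prop :=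
  ∀ x : P, WellFounded (fun a b : {y : P // x ≤ y} => (a : P) < (b : P)) ∧
    WellFounded (fun a b : {y : P // y ≤ x} => (b : P) < (a : P))

variable {P}

/-- A simple multifraction on the interval monoid: each entry is a proper interval, and
consecutive entries share their target (at positive positions) or source (at negative ones). -/
def MfSimple (a : Multifraction (IntervalMonoid P)) : Prop :=
  ∃ l : List (Bool × Iv P),
    a.entries = l.map (fun p => (p.1, intv p.2)) ∧
    (∀ p ∈ l, p.2.1.1 ≠ p.2.1.2) ∧
    l.Chain' fun p q => if p.1 then p.2.1.2 = q.2.1.2 else p.2.1.1 = q.2.1.1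

/-- A positive `n`-zigzag in `P`. -/
def PosZigzag (n : ℕ) (x : ℕ → P) : Prop :=
  ∀ i ≤ n, i % 2 = 0 → (1 ≤ i → x i < x (i - 1)) ∧ (i < n → x i < x (i + 1))

/-- A negative `n`-zigzag in `P`. -/
def NegZigzag (n : ℕ) (x : ℕ → P) : Prop :=
  ∀ i ≤ n, i % 2 = 1 → (1 ≤ i → x i < x (i - 1)) ∧ (i < n → x i < x (i + 1))

/-- The zigzag `x` is simple: `x₁, ..., xₙ` are pairwise distinct. -/
def SimpleZz (n : ℕ) (x : ℕ → P) : Prop :=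
  ∀ i j, 1 ≤ i → i < j → j ≤ n → x i ≠ x j

/-- Reducibility of a zigzag at level `i`. -/
def ZzRedAt (n : ℕ) (x : ℕ → P) (i : ℕ) : Prop :=
  1 ≤ i ∧ i < n ∧
  ((2 ≤ i ∧ x i < x (i + 1) ∧
      ∃ y, x i < y ∧ y ≤ x (i + 1) ∧ ∃ u, x (i - 1) ≤ u ∧ y ≤ u) ∨
   (2 ≤ i ∧ x (i + 1) < x i ∧
      ∃ y, x (i + 1) ≤ y ∧ y < x i ∧ ∃ u, u ≤ x (i - 1) ∧ u ≤ y) ∨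
   (i = 1 ∧ x 0 < x 1 ∧ ∃ y, x 0 ≤ y ∧ y < x 1 ∧ x 2 ≤ y) ∨
   (i = 1 ∧ x 1 < x 0 ∧ ∃ y, x 1 < y ∧ y ≤ x 0 ∧ y ≤ x 2))

/-- A zigzag is reducible if it is reducible at some level. -/
def ZzReducible (n : ℕ) (x : ℕ → P) : Prop := ∃ i, ZzRedAt n x i

/-- The multifraction `a` is the image of the positive `n`-zigzag `x` under the map `F`. -/
def PosImage (n : ℕ) (x : ℕ → P) (a : Multifraction (IntervalMonoid P)) : Prop :=
  a.entries.length = n ∧ ∀ j < n,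
    if j % 2 = 0 then
      ∃ h : x j ≤ x (j + 1), a.entries[j]? = some (true, intv ⟨(x j, x (j + 1)), h⟩)
    else
      ∃ h : x (j + 1) ≤ x j, a.entries[j]? = some (false, intv ⟨(x (j + 1), x j), h⟩)

/-- The multifraction `a` is the image of the negative `n`-zigzag `x` under the map `F`. -/
def NegImage (n : ℕ) (x : ℕ → P) (a : Multifraction (IntervalMonoid P)) : Prop :=
  a.entries.length = n ∧ ∀ j < n,
    if j % 2 = 0 then
      ∃ h : x (j + 1) ≤ x j, a.entries[j]? = some (false, intv ⟨(x (j + 1), x j), h⟩)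
    else
      ∃ h : x j ≤ x (j + 1), a.entries[j]? = some (true, intv ⟨(x j, x (j + 1)), h⟩)

end Interval

section EmbedProof

variable {P : Type*} [PartialOrder P]

open scoped Classical

/-- Insert an interval at the front of a normalized list. -/
noncomputable def ivCons (I : Iv P) : List (Iv P) → List (Iv P)
  | [] => if I.1.1 = I.1.2 then [] else [I]
  | J :: t =>
      if I.1.1 = I.1.2 then J :: t
      else if h : I.1.2 = J.1.1 then ⟨(I.1.1, J.1.2), (I.2.trans h.le).trans J.2⟩ :: t
      else I :: J :: t

lemma ivCons_triv {I : Iv P} (h : I.1.1 = I.1.2) (l : List (Iv P)) : ivCons I l = l := by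
  cases l <;> simp [ivCons, h]

lemma ivCons_nil {I : Iv P} (h : I.1.1 ≠ I.1.2) : ivCons I [] = [I] := by
  simp [ivCons, h]

lemma ivCons_merge {I J : Iv P} (h : I.1.1 ≠ I.1.2) (h2 : I.1.2 = J.1.1) (t : List (Iv P)) :
    ivCons I (J :: t) = ⟨(I.1.1, J.1.2), (I.2.trans h2.le).trans J.2⟩ :: t := by
  simp only [ivCons]
  rw [if_neg h, dif_pos h2]

lemma ivCons_cons {I J : Iv P} (h : I.1.1 ≠ I.1.2) (h2 : I.1.2 ≠ J.1.1) (t : List (Iv P)) :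
    ivCons I (J :: t) = I :: J :: t := by
  simp only [ivCons]
  rw [if_neg h, dif_neg h2]

lemma ivCons_comp (x y z : P) (hxy : x ≤ y) (hyz : y ≤ z) (l : List (Iv P)) :
    ivCons ⟨(x, y), hxy⟩ (ivCons ⟨(y, z), hyz⟩ l) = ivCons ⟨(x, z), hxy.trans hyz⟩ l := by
  by_cases h1 : y = z
  · subst h1
    rw [ivCons_triv (I := ⟨(y, y), hyz⟩) rfl]
  by_cases h0 : x = y
  · subst h0
    rw [ivCons_triv (I := ⟨(x, x), hxy⟩) rfl]
  have hxz : x ≠ z := fun hxz => h0 (le_antisymm hxy (hyz.trans hxz.ge))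
  cases l with
  | nil =>
      erw [ivCons_nil (I := ⟨(y, z), hyz⟩) h1, ivCons_merge (J := ⟨(y, z), hyz⟩) h0 rfl, ivCons_nil (I := ⟨(x, z), hxy.trans hyz⟩) hxz]
  | cons K t =>
      by_cases h2 : z = K.1.1
      · erw [ivCons_merge (I := ⟨(y, z), hyz⟩) h1 h2, ivCons_merge (I := ⟨(x, y), hxy⟩) (J := ⟨(y, K.1.2), hyz.trans (h2.le.trans K.2)⟩) h0 rfl, ivCons_merge (I := ⟨(x, z), hxy.trans hyz⟩) hxz h2]
      · erw [ivCons_cons (I := ⟨(y, z), hyz⟩) h1 h2, ivCons_merge (I := ⟨(x, y), hxy⟩) (J := ⟨(y, z), hyz⟩) h0 rfl, ivCons_cons (I := ⟨(x, z), hxy.trans hyz⟩) hxz h2]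

/-- normalized lists -/
def IvNorm (l : List (Iv P)) : Prop :=
  (∀ I ∈ l, I.1.1 ≠ I.1.2) ∧ l.Chain' fun I J => I.1.2 ≠ J.1.1

lemma ivNorm_nil : IvNorm ([] : List (Iv P)) := ⟨by simp, List.isChain_nil⟩

lemma ivNorm_ivCons {l : List (Iv P)} (hl : IvNorm l) (I : Iv P) : IvNorm (ivCons I l) := by
  by_cases h : I.1.1 = I.1.2
  · rw [ivCons_triv h]; exact hl
  cases l with
  | nil =>
      rw [ivCons_nil h]
      exact ⟨by simpa using h, List.isChain_singleton _⟩
  | cons J t =>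
      by_cases h2 : I.1.2 = J.1.1
      · rw [ivCons_merge h h2]
        obtain ⟨hnt, hch⟩ := hl
        constructor
        · intro K hK
          rcases List.mem_cons.1 hK with rfl | hK
          · intro he
            exact h (le_antisymm I.2 (h2.le.trans (J.2.trans he.ge)))
          · exact hnt K (List.mem_cons_of_mem _ hK)
        · have hch := List.isChain_cons.1 hch; refine List.isChain_cons.2 ?_
          exact ⟨hch.1, hch.2⟩
      · rw [ivCons_cons h h2]
        constructor
        · intro K hK
          rcases List.mem_cons.1 hK with rfl | hK
          · exact h
          · exact hl.1 K hK
        · exact List.isChain_cons_cons.2 ⟨h2, hl.2⟩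

/-- fold-in of a word onto a normalized list -/
noncomputable def nfAux (w l : List (Iv P)) : List (Iv P) := w.foldr ivCons l

lemma nfAux_nil (l : List (Iv P)) : nfAux [] l = l := rfl

lemma nfAux_cons (I : Iv P) (w l : List (Iv P)) :
    nfAux (I :: w) l = ivCons I (nfAux w l) := rfl

lemma nfAux_append (w v l : List (Iv P)) : nfAux (w ++ v) l = nfAux w (nfAux v l) :=
  List.foldr_append ..

/-- the normal form -/
noncomputable def ivNf (w : List (Iv P)) : List (Iv P) := nfAux w []

lemma ivNorm_ivNf (w : List (Iv P)) : IvNorm (ivNf w) := by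
  induction w with
  | nil => exact ivNorm_nil
  | cons I t ih => exact ivNorm_ivCons ih I

lemma ivCons_nfAux (I : Iv P) (m l : List (Iv P)) :
    ivCons I (nfAux m l) = nfAux (ivCons I m) l := by
  by_cases h : I.1.1 = I.1.2
  · rw [ivCons_triv h, ivCons_triv h]
  cases m with
  | nil => rw [ivCons_nil h]; rfl
  | cons J t =>
      by_cases h2 : I.1.2 = J.1.1
      · obtain ⟨⟨x, y⟩, hxy⟩ := I
        obtain ⟨⟨y', z⟩, hyz⟩ := J
        obtain rfl : y = y' := h2
        erw [ivCons_merge (J := ⟨(y, z), hyz⟩) h rfl, nfAux_cons, nfAux_cons]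
        exact ivCons_comp x y z hxy hyz _
      · rw [ivCons_cons h h2]
        rfl

lemma nfAux_nf (m l : List (Iv P)) : nfAux m l = nfAux (ivNf m) l := by
  induction m with
  | nil => rfl
  | cons I t ih =>
      rw [nfAux_cons, ih, ivCons_nfAux]
      rfl

lemma ivCons_ne_nil {I : Iv P} (h : I.1.1 ≠ I.1.2) (l : List (Iv P)) : ivCons I l ≠ [] := by
  cases l with
  | nil => rw [ivCons_nil h]; simp
  | cons J t =>
      by_cases h2 : I.1.2 = J.1.1
      · rw [ivCons_merge h h2]; simp
      · rw [ivCons_cons h h2]; simp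

/-- the congruence of equal normal forms -/
noncomputable def nfCon : Con (FreeMonoid (Iv P)) where
  r a b := ivNf (FreeMonoid.toList a) = ivNf (FreeMonoid.toList b)
  iseqv := ⟨fun _ => rfl, Eq.symm, Eq.trans⟩
  mul' := by
    intro a b c d h1 h2
    have h1' : ivNf (FreeMonoid.toList a) = ivNf (FreeMonoid.toList b) := h1
    have h2' : ivNf (FreeMonoid.toList c) = ivNf (FreeMonoid.toList d) := h2
    show ivNf (FreeMonoid.toList (a * c)) = ivNf (FreeMonoid.toList (b * d))
    unfold ivNf
    rw [FreeMonoid.toList_mul, FreeMonoid.toList_mul, nfAux_append, nfAux_append]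
    change nfAux _ (ivNf _) = nfAux _ (ivNf _)
    rw [h2', nfAux_nf (FreeMonoid.toList a), nfAux_nf (FreeMonoid.toList b), h1']

lemma conGen_le_nfCon : conGen (intervalRel P) ≤ nfCon := by
  apply Con.conGen_le.2
  rintro u v (⟨x, y, z, hxy, hyz, rfl, rfl⟩ | ⟨x, rfl, rfl⟩)
  · show ivNf _ = ivNf _
    unfold ivNf
    erw [FreeMonoid.toList_mul, FreeMonoid.toList_of, FreeMonoid.toList_of]
    show nfAux [⟨(x, z), _⟩] [] = nfAux [⟨(x, y), hxy⟩, ⟨(y, z), hyz⟩] []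
    erw [nfAux_cons, nfAux_cons, nfAux_cons, nfAux_nil, ivCons_comp]
  · show ivNf _ = ivNf _
    unfold ivNf
    erw [FreeMonoid.toList_of, FreeMonoid.toList_one]
    show ivCons _ [] = []
    erw [ivCons_triv (I := ⟨(x, x), le_refl x⟩) rfl]

lemma nf_eq_of_con {a b : FreeMonoid (Iv P)} (h : conGen (intervalRel P) a b) :
    ivNf (FreeMonoid.toList a) = ivNf (FreeMonoid.toList b) :=
  conGen_le_nfCon h

/-- every word is congruent to its normal form -/
lemma con_ivCons (I : Iv P) (m : List (Iv P)) :
    conGen (intervalRel P) (FreeMonoid.of I * FreeMonoid.ofList m)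
      (FreeMonoid.ofList (ivCons I m)) := by
  by_cases h : I.1.1 = I.1.2
  · rw [ivCons_triv h]
    obtain ⟨⟨x, y⟩, hxy⟩ := I
    obtain rfl : x = y := h
    have : conGen (intervalRel P) (FreeMonoid.of ⟨(x, x), hxy⟩) 1 :=
      ConGen.Rel.of _ _ (Or.inr ⟨x, rfl, rfl⟩)
    simpa using (conGen (intervalRel P)).mul this
      ((conGen (intervalRel P)).refl (FreeMonoid.ofList m))
  cases m with
  | nil =>
      rw [ivCons_nil h]
      simpa using (conGen (intervalRel P)).refl (FreeMonoid.of I)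
  | cons J t =>
      by_cases h2 : I.1.2 = J.1.1
      · obtain ⟨⟨x, y⟩, hxy⟩ := I
        obtain ⟨⟨y', z⟩, hyz⟩ := J
        obtain rfl : y = y' := h2
        erw [ivCons_merge (J := ⟨(y, z), hyz⟩) h rfl, FreeMonoid.ofList_cons, FreeMonoid.ofList_cons, ← mul_assoc]
        refine (conGen (intervalRel P)).mul ?_ ((conGen (intervalRel P)).refl _)
        exact (conGen (intervalRel P)).symm
          (ConGen.Rel.of _ _ (Or.inl ⟨x, y, z, hxy, hyz, rfl, rfl⟩))
      · rw [ivCons_cons h h2]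
        exact (conGen (intervalRel P)).refl _

lemma con_nf (w : List (Iv P)) :
    conGen (intervalRel P) (FreeMonoid.ofList w) (FreeMonoid.ofList (ivNf w)) := by
  induction w with
  | nil => exact (conGen (intervalRel P)).refl _
  | cons I t ih =>
      have h1 : conGen (intervalRel P) (FreeMonoid.ofList (I :: t))
          (FreeMonoid.of I * FreeMonoid.ofList (ivNf t)) := by
        rw [FreeMonoid.ofList_cons]
        exact (conGen (intervalRel P)).mul ((conGen (intervalRel P)).refl _) ih
      exact h1.trans (con_ivCons I (ivNf t))

/-! evaluation in a free group through a map `e : P → α` -/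

/-- the evaluation homomorphism through `e` -/
noncomputable def ivFE {α : Type*} (e : P → α) : FreeMonoid (Iv P) →* FreeGroup α :=
  FreeMonoid.lift fun I => (FreeGroup.of (e I.1.1))⁻¹ * FreeGroup.of (e I.1.2)

lemma conGen_le_ker_ivFE {α : Type*} (e : P → α) :
    conGen (intervalRel P) ≤ Con.ker (ivFE (P := P) e) := by
  apply Con.conGen_le.2
  rintro u v (⟨x, y, z, hxy, hyz, rfl, rfl⟩ | ⟨x, rfl, rfl⟩)
  · show ivFE e _ = ivFE e _
    rw [map_mul]
    show (FreeGroup.of (e x))⁻¹ * FreeGroup.of (e z) =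
      (FreeGroup.of (e x))⁻¹ * FreeGroup.of (e y) *
        ((FreeGroup.of (e y))⁻¹ * FreeGroup.of (e z))
    group
  · show ivFE e _ = ivFE e _
    show (FreeGroup.of (e x))⁻¹ * FreeGroup.of (e x) = 1
    group

/-- endpoints of a list of intervals -/
def evs : List (Iv P) → List P
  | [] => []
  | I :: t => I.1.1 :: I.1.2 :: evs t

/-- the word in the free group associated with a list of intervals -/
def wdE {α : Type*} (e : P → α) : List (Iv P) → List (α × Bool)
  | [] => []
  | I :: t => (e I.1.1, false) :: (e I.1.2, true) :: wdE e t

/-- `e` is injective on members of `S` -/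
def SepOn {α : Type*} (e : P → α) (S : List P) : Prop :=
  ∀ p ∈ S, ∀ q ∈ S, e p = e q → p = q

lemma sepOn_left {α : Type*} {e : P → α} {S T : List P} (h : SepOn e (S ++ T)) : SepOn e S :=
  fun p hp q hq => h p (List.mem_append_left _ hp) q (List.mem_append_left _ hq)

lemma sepOn_right {α : Type*} {e : P → α} {S T : List P} (h : SepOn e (S ++ T)) : SepOn e T :=
  fun p hp q hq => h p (List.mem_append_right _ hp) q (List.mem_append_right _ hq)

lemma sepOn_tail {α : Type*} {e : P → α} {I : Iv P} {t : List (Iv P)}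
    (h : SepOn e (evs (I :: t))) : SepOn e (evs t) :=
  fun p hp q hq => h p (List.mem_cons_of_mem _ (List.mem_cons_of_mem _ hp))
    q (List.mem_cons_of_mem _ (List.mem_cons_of_mem _ hq))

lemma ivFE_eq_mk {α : Type*} (e : P → α) (m : List (Iv P)) :
    ivFE e (FreeMonoid.ofList m) = FreeGroup.mk (wdE e m) := by
  induction m with
  | nil => rfl
  | cons I t ih =>
      rw [FreeMonoid.ofList_cons, map_mul, ih]
      show (FreeGroup.of (e I.1.1))⁻¹ * FreeGroup.of (e I.1.2) * FreeGroup.mk (wdE e t) = _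
      rw [show (FreeGroup.of (e I.1.1))⁻¹ = FreeGroup.mk [(e I.1.1, false)] by
            rw [FreeGroup.of, FreeGroup.inv_mk]; rfl,
          FreeGroup.of, FreeGroup.mul_mk, FreeGroup.mul_mk]
      rfl

lemma reduce_wdE {α : Type*} (e : P → α) {m : List (Iv P)} (hm : IvNorm m)
    (he : SepOn e (evs m)) : FreeGroup.reduce (wdE e m) = wdE e m := by
  induction m with
  | nil => rfl
  | cons I t ih =>
      have ht : IvNorm t := ⟨fun J hJ => hm.1 J (List.mem_cons_of_mem _ hJ),
        (List.isChain_cons.1 hm.2).2⟩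
      have hI : e I.1.1 ≠ e I.1.2 := by
        intro hcon
        exact hm.1 I (List.mem_cons_self)
          (he _ (List.mem_cons_self) _
            (List.mem_cons_of_mem _ (List.mem_cons_self)) hcon)
      have hred : FreeGroup.reduce (wdE e t) = wdE e t := ih ht (sepOn_tail he)
      show FreeGroup.reduce ((e I.1.1, false) :: (e I.1.2, true) :: wdE e t) = _
      rw [FreeGroup.reduce.cons, FreeGroup.reduce.cons, hred]
      cases t with
      | nil => simp [wdE, hI]
      | cons J t' =>
          have hIJ : e I.1.2 ≠ e J.1.1 := by
            intro hcon
            exact (List.isChain_cons_cons.1 hm.2).1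
              (he _ (List.mem_cons_of_mem _ (List.mem_cons_self)) _
                (List.mem_cons_of_mem _ (List.mem_cons_of_mem _ (List.mem_cons_self)))
                hcon)
          simp [wdE, hI, hIJ]

lemma wdE_inj {α : Type*} (e : P → α) {m m' : List (Iv P)}
    (he : SepOn e (evs m ++ evs m')) (h : wdE e m = wdE e m') : m = m' := by
  induction m generalizing m' with
  | nil =>
      cases m' with
      | nil => rfl
      | cons J t => exact absurd h (by simp [wdE])
  | cons I t ih =>
      cases m' with
      | nil => exact absurd h (by simp [wdE])
      | cons J t' =>
          simp only [wdE, List.cons.injEq, Prod.mk.injEq] at h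
          obtain ⟨⟨h1, -⟩, ⟨h2, -⟩, h3⟩ := h
          have m1 : I.1.1 ∈ evs (I :: t) ++ evs (J :: t') :=
            List.mem_append_left _ (List.mem_cons_self)
          have m2 : J.1.1 ∈ evs (I :: t) ++ evs (J :: t') :=
            List.mem_append_right _ (List.mem_cons_self)
          have m3 : I.1.2 ∈ evs (I :: t) ++ evs (J :: t') :=
            List.mem_append_left _ (List.mem_cons_of_mem _ (List.mem_cons_self))
          have m4 : J.1.2 ∈ evs (I :: t) ++ evs (J :: t') :=
            List.mem_append_right _ (List.mem_cons_of_mem _ (List.mem_cons_self))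
          have e1 : I.1.1 = J.1.1 := he _ m1 _ m2 h1
          have e2 : I.1.2 = J.1.2 := he _ m3 _ m4 h2
          have he' : SepOn e (evs t ++ evs t') := by
            intro p hp q hq hpq
            refine he p ?_ q ?_ hpq <;>
              [rcases List.mem_append.1 hp with h' | h'; rcases List.mem_append.1 hq with h' | h'] <;>
              first
                | exact List.mem_append_left _ (List.mem_cons_of_mem _ (List.mem_cons_of_mem _ h'))
                | exact List.mem_append_right _ (List.mem_cons_of_mem _ (List.mem_cons_of_mem _ h'))
          rw [ih he' h3]
          congr 1
          obtain ⟨⟨x, y⟩, hxy⟩ := I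
          obtain ⟨⟨x', y'⟩, hx'y'⟩ := J
          obtain rfl : x = x' := e1
          obtain rfl : y = y' := e2
          rfl

/-- main separation lemma -/
lemma sep_eq {α : Type*} {w v : FreeMonoid (Iv P)} (e : P → α)
    (he : SepOn e (evs (ivNf (FreeMonoid.toList w)) ++ evs (ivNf (FreeMonoid.toList v))))
    (h : ivFE e w = ivFE e v) :
    (w : (conGen (intervalRel P)).Quotient) = v := by
  have hw : ivFE e w = ivFE e (FreeMonoid.ofList (ivNf (FreeMonoid.toList w))) := by
    have := conGen_le_ker_ivFE e (con_nf (FreeMonoid.toList w))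
    rwa [FreeMonoid.ofList_toList] at this
  have hv : ivFE e v = ivFE e (FreeMonoid.ofList (ivNf (FreeMonoid.toList v))) := by
    have := conGen_le_ker_ivFE e (con_nf (FreeMonoid.toList v))
    rwa [FreeMonoid.ofList_toList] at this
  have heq : ivFE e (FreeMonoid.ofList (ivNf (FreeMonoid.toList w))) =
      ivFE e (FreeMonoid.ofList (ivNf (FreeMonoid.toList v))) := by
    rw [← hw, ← hv]; exact h
  rw [ivFE_eq_mk, ivFE_eq_mk] at heq
  have hred := FreeGroup.reduce.sound heq
  rw [reduce_wdE e (ivNorm_ivNf _) (sepOn_left he),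
    reduce_wdE e (ivNorm_ivNf _) (sepOn_right he)] at hred
  have hnf : ivNf (FreeMonoid.toList w) = ivNf (FreeMonoid.toList v) := wdE_inj e he hred
  have hc2 := con_nf (FreeMonoid.toList v)
  rw [← hnf] at hc2
  have h1 := (con_nf (FreeMonoid.toList w)).trans hc2.symm
  rw [FreeMonoid.ofList_toList, FreeMonoid.ofList_toList] at h1
  exact ((conGen (intervalRel P)).eq).2 h1

/-- a separating map into `ℕ` always exists -/
lemma exists_sep (S : List P) : ∃ e : P → ℕ, SepOn e S := by
  classical
  exact ⟨fun p => S.idxOf p, fun p hp q hq h => (List.idxOf_inj hp).1 h⟩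

lemma nfAux_eq_nil {m l : List (Iv P)} (hm : IvNorm m) (h : nfAux m l = []) :
    m = [] ∧ l = [] := by
  cases m with
  | nil => exact ⟨rfl, h⟩
  | cons I t =>
      rw [nfAux_cons] at h
      exact absurd h (ivCons_ne_nil (hm.1 I (List.mem_cons_self)) _)

end EmbedProof

/-- The interval monoid of a poset embeds into its enveloping group; in particular it is
cancellative and `1` is its only invertible element. -/
theorem intervalMonoid_embeds_envelopingGroup (P : Type*) [PartialOrder P] :
    (∀ (G : Type*) [Group G] (η : IntervalMonoid P →* G),
        IsEnvelopingGroup (IntervalMonoid P) G η → Function.Injective η) ∧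
    Cancellative (IntervalMonoid P) ∧ TrivialUnits (IntervalMonoid P) := by
  classical
  have cancel : Cancellative (IntervalMonoid P) := by
    constructor
    · intro a b c h
      obtain ⟨wa, rfl⟩ := Con.mk'_surjective a
      obtain ⟨wb, rfl⟩ := Con.mk'_surjective b
      obtain ⟨wc, rfl⟩ := Con.mk'_surjective c
      have h1 : (conGen (intervalRel P)).mk' (wa * wb) = (conGen (intervalRel P)).mk' (wa * wc) := by
        erw [map_mul, map_mul, h]; rfl
      have h2 : conGen (intervalRel P) (wa * wb) (wa * wc) :=
        ((conGen (intervalRel P)).eq).1 h1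
      obtain ⟨e, he⟩ := exists_sep
        (evs (ivNf (FreeMonoid.toList wb)) ++ evs (ivNf (FreeMonoid.toList wc)))
      have h3 : ivFE e (wa * wb) = ivFE e (wa * wc) := conGen_le_ker_ivFE e h2
      rw [map_mul, map_mul] at h3
      exact sep_eq e he (mul_left_cancel h3)
    · intro a b c h
      obtain ⟨wa, rfl⟩ := Con.mk'_surjective a
      obtain ⟨wb, rfl⟩ := Con.mk'_surjective b
      obtain ⟨wc, rfl⟩ := Con.mk'_surjective c
      have h1 : (conGen (intervalRel P)).mk' (wb * wa) = (conGen (intervalRel P)).mk' (wc * wa) := by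
        erw [map_mul, map_mul, h]; rfl
      have h2 : conGen (intervalRel P) (wb * wa) (wc * wa) :=
        ((conGen (intervalRel P)).eq).1 h1
      obtain ⟨e, he⟩ := exists_sep
        (evs (ivNf (FreeMonoid.toList wb)) ++ evs (ivNf (FreeMonoid.toList wc)))
      have h3 : ivFE e (wb * wa) = ivFE e (wc * wa) := conGen_le_ker_ivFE e h2
      rw [map_mul, map_mul] at h3
      exact sep_eq e he (mul_right_cancel h3)
  refine ⟨?_, cancel, ?_⟩
  · intro G _ η hG a b hab
    obtain ⟨w, rfl⟩ := Con.mk'_surjective a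
    obtain ⟨v, rfl⟩ := Con.mk'_surjective b
    obtain ⟨e, he⟩ := exists_sep
      (evs (ivNf (FreeMonoid.toList w)) ++ evs (ivNf (FreeMonoid.toList v)))
    set f0 : IntervalMonoid P →* FreeGroup ℕ :=
      Con.lift _ (ivFE e) (conGen_le_ker_ivFE e) with hf0
    set f : IntervalMonoid P →* ULift (FreeGroup ℕ) :=
      (MulEquiv.ulift.symm.toMonoidHom).comp f0 with hf
    obtain ⟨g, hg, -⟩ := hG (ULift (FreeGroup ℕ)) f
    have hfab : f ((conGen (intervalRel P)).mk' w) = f ((conGen (intervalRel P)).mk' v) := by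
      rw [← hg]
      exact congrArg g hab
    have hf0ab : f0 ((conGen (intervalRel P)).mk' w) = f0 ((conGen (intervalRel P)).mk' v) := by
      have h' : MulEquiv.ulift.symm (f0 ((conGen (intervalRel P)).mk' w)) =
          MulEquiv.ulift.symm (f0 ((conGen (intervalRel P)).mk' v)) := hfab
      exact MulEquiv.ulift.symm.injective h'
    have hE : ivFE e w = ivFE e v := hf0ab
    exact sep_eq e he hE
  · intro a ha
    obtain ⟨u, rfl⟩ := ha
    obtain ⟨w, hw⟩ := Con.mk'_surjective (u : IntervalMonoid P)
    obtain ⟨v, hv⟩ := Con.mk'_surjective ((u⁻¹ : (IntervalMonoid P)ˣ) : IntervalMonoid P)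
    have h1 : (conGen (intervalRel P)).mk' (w * v) = (conGen (intervalRel P)).mk' 1 := by
      erw [map_mul, hw, hv, map_one, Units.mul_inv]; rfl
    have h2 : conGen (intervalRel P) (w * v) 1 :=
      ((conGen (intervalRel P)).eq).1 h1
    have h3 := nf_eq_of_con h2
    rw [FreeMonoid.toList_mul] at h3
    have h30 : ivNf (FreeMonoid.toList w ++ FreeMonoid.toList v) = [] := by
      rw [h3]; rfl
    have h4 : nfAux (ivNf (FreeMonoid.toList w)) (ivNf (FreeMonoid.toList v)) = [] := by
      rw [← nfAux_nf]
      show nfAux _ (nfAux _ []) = []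
      rw [← nfAux_append]
      exact h30
    obtain ⟨hw0, -⟩ := nfAux_eq_nil (ivNorm_ivNf _) h4
    have h5 : conGen (intervalRel P) w 1 := by
      have := con_nf (FreeMonoid.toList w)
      rw [hw0, FreeMonoid.ofList_toList] at this
      exact this
    rw [← hw]
    calc (conGen (intervalRel P)).mk' w = (conGen (intervalRel P)).mk' 1 := by
          show (w : (conGen (intervalRel P)).Quotient) = (1 : FreeMonoid (Iv P))
          exact ((conGen (intervalRel P)).eq).2 h5
      _ = 1 := map_one _
end

section
/- In the interval monoid Int(P) of a poset P, every nontrivial element admits a unique expression as a product I₁ ⋯ Iₚ of proper intervals such that the target of Iᵢ differs from the source of Iᵢ₊₁ for every i < p (a normal decomposition). -/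
section NormalForm

open Classical in
/-- Cons an interval onto a normal list, normalizing. -/
noncomputable def consN {P : Type*} [PartialOrder P] (I : Iv P) (l : List (Iv P)) :
    List (Iv P) :=
  if I.1.1 = I.1.2 then l
  else match l with
    | [] => [I]
    | J :: t =>
      if h : I.1.2 = J.1.1 then ⟨(I.1.1, J.1.2), I.2.trans (h.trans_le J.2)⟩ :: t
      else I :: J :: t

variable {P : Type*} [PartialOrder P]

/-- A list of intervals is normal. -/
def NormalL (l : List (Iv P)) : Prop :=
  (∀ I ∈ l, I.1.1 ≠ I.1.2) ∧ l.Chain' (fun I J => I.1.2 ≠ J.1.1)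

lemma consN_triv {I : Iv P} (hI : I.1.1 = I.1.2) (l : List (Iv P)) : consN I l = l := by
  unfold consN; rw [if_pos hI]

lemma consN_nil {I : Iv P} (hI : I.1.1 ≠ I.1.2) : consN I [] = [I] := by
  unfold consN; rw [if_neg hI]

lemma consN_merge {I J : Iv P} (hI : I.1.1 ≠ I.1.2) (h : I.1.2 = J.1.1) (t : List (Iv P)) :
    consN I (J :: t) = ⟨(I.1.1, J.1.2), I.2.trans (h.trans_le J.2)⟩ :: t := by
  unfold consN; rw [if_neg hI]; exact dif_pos h

lemma consN_nomerge {I J : Iv P} (hI : I.1.1 ≠ I.1.2) (h : I.1.2 ≠ J.1.1) (t : List (Iv P)) :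
    consN I (J :: t) = I :: J :: t := by
  unfold consN; rw [if_neg hI]; exact dif_neg h

lemma consN_key (x y z : P) (hxy : x ≤ y) (hyz : y ≤ z) (b : List (Iv P)) :
    consN ⟨(x, z), hxy.trans hyz⟩ b = consN ⟨(x, y), hxy⟩ (consN ⟨(y, z), hyz⟩ b) := by
  by_cases hx : x = y
  · subst hx
    rw [consN_triv (I := (⟨(x, x), hxy⟩ : Iv P)) rfl]
  by_cases hy : y = z
  · subst hy
    rw [consN_triv (I := (⟨(y, y), hyz⟩ : Iv P)) rfl]
  have hxz : x ≠ z := ne_of_lt (lt_of_lt_of_le (hxy.lt_of_ne hx) hyz)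
  match b with
  | [] =>
    rw [consN_nil (I := (⟨(y, z), hyz⟩ : Iv P)) hy, consN_nil (I := (⟨(x, z), _⟩ : Iv P)) hxz,
      consN_merge (I := (⟨(x, y), hxy⟩ : Iv P)) (J := (⟨(y, z), hyz⟩ : Iv P)) hx rfl]
  | J :: t =>
    by_cases hzJ : z = J.1.1
    · rw [consN_merge (I := (⟨(y, z), hyz⟩ : Iv P)) hy hzJ,
        consN_merge (I := (⟨(x, z), _⟩ : Iv P)) hxz hzJ]
      exact (consN_merge (I := (⟨(x, y), hxy⟩ : Iv P)) (J := (⟨(y, J.1.2), hyz.trans (hzJ.trans_le J.2)⟩ : Iv P)) hx rfl t).symm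
    · rw [consN_nomerge (I := (⟨(y, z), hyz⟩ : Iv P)) hy hzJ,
        consN_merge (I := (⟨(x, y), hxy⟩ : Iv P)) (J := (⟨(y, z), hyz⟩ : Iv P)) hx rfl,
        consN_nomerge (I := (⟨(x, z), _⟩ : Iv P)) hxz hzJ]

lemma consN_normal {l : List (Iv P)} (h : NormalL l) (I : Iv P) : NormalL (consN I l) := by
  by_cases hI : I.1.1 = I.1.2
  · rwa [consN_triv hI]
  match l with
  | [] =>
    rw [consN_nil hI]
    exact ⟨by simpa using hI, List.isChain_singleton _⟩
  | J :: t =>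
    by_cases hIJ : I.1.2 = J.1.1
    · rw [consN_merge hI hIJ]
      refine ⟨?_, ?_⟩
      · intro K hK
        rcases List.mem_cons.1 hK with rfl | hK
        · exact ne_of_lt (lt_of_lt_of_le (I.2.lt_of_ne hI) (hIJ.trans_le J.2))
        · exact h.1 K (List.mem_cons_of_mem _ hK)
      · rcases t with _ | ⟨K, t'⟩
        · exact List.isChain_singleton _
        · exact List.isChain_cons_cons.2 ⟨(List.isChain_cons_cons.1 h.2).1, (List.isChain_cons_cons.1 h.2).2⟩
    · rw [consN_nomerge hI hIJ]
      refine ⟨?_, List.isChain_cons_cons.2 ⟨hIJ, h.2⟩⟩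
      intro K hK
      rcases List.mem_cons.1 hK with rfl | hK
      · exact hI
      · exact h.1 K hK

lemma normF_normal (l : List (Iv P)) : NormalL (l.foldr consN []) := by
  induction l with
  | nil => exact ⟨by simp, List.isChain_nil⟩
  | cons I t ih => exact consN_normal ih I

lemma normF_fix {l : List (Iv P)} (h : NormalL l) : l.foldr consN [] = l := by
  induction l with
  | nil => rfl
  | cons I t ih =>
    have ht : NormalL t := ⟨fun K hK => h.1 K (List.mem_cons_of_mem _ hK),
      (List.isChain_cons.1 h.2).2⟩
    have hI : I.1.1 ≠ I.1.2 := h.1 I List.mem_cons_self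
    show consN I (t.foldr consN []) = I :: t
    rw [ih ht]
    match t with
    | [] => exact consN_nil hI
    | J :: t' => exact consN_nomerge hI (List.isChain_cons_cons.1 h.2).1 _

/-- The congruence of having the same normal-form fold. -/
def normCon (P : Type*) [PartialOrder P] : Con (FreeMonoid (Iv P)) where
  r u v := ∀ b : List (Iv P), u.toList.foldr consN b = v.toList.foldr consN b
  iseqv := ⟨fun _ _ => rfl, fun h b => (h b).symm, fun h1 h2 b => (h1 b).trans (h2 b)⟩
  mul' := by
    intro w x y z h1 h2 b
    show (w * y).toList.foldr consN b = (x * z).toList.foldr consN b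
    simp only [FreeMonoid.toList_mul, List.foldr_append]
    rw [h2 b, h1 _]

lemma conGen_le_normCon : conGen (intervalRel P) ≤ normCon P := by
  apply Con.conGen_le.2
  rintro u v (⟨x, y, z, hxy, hyz, rfl, rfl⟩ | ⟨x, rfl, rfl⟩) <;> intro b
  · exact consN_key x y z hxy hyz b
  · show [(⟨(x, x), le_refl x⟩ : Iv P)].foldr consN b = ([] : List (Iv P)).foldr consN b
    exact consN_triv rfl b

lemma intv_trivial (x : P) (h : x ≤ x) : intv (⟨(x, x), h⟩ : Iv P) = 1 := by
  have : (conGen (intervalRel P)) (FreeMonoid.of ⟨(x, x), le_refl x⟩) 1 :=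
    ConGen.Rel.of _ _ (Or.inr ⟨x, rfl, rfl⟩)
  exact (Con.eq _).2 this

lemma intv_mul {x y z : P} (hxy : x ≤ y) (hyz : y ≤ z) :
    intv (⟨(x, y), hxy⟩ : Iv P) * intv ⟨(y, z), hyz⟩ = intv ⟨(x, z), hxy.trans hyz⟩ := by
  have : (conGen (intervalRel P)) (FreeMonoid.of ⟨(x, z), hxy.trans hyz⟩)
      (FreeMonoid.of ⟨(x, y), hxy⟩ * FreeMonoid.of ⟨(y, z), hyz⟩) :=
    ConGen.Rel.of _ _ (Or.inl ⟨x, y, z, hxy, hyz, rfl, rfl⟩)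
  exact ((Con.eq _).2 this).symm

lemma prod_consN (I : Iv P) (l : List (Iv P)) :
    ((consN I l).map intv).prod = intv I * ((l.map intv).prod) := by
  by_cases hI : I.1.1 = I.1.2
  · have h1 : intv I = 1 := by
      obtain ⟨⟨u, v⟩, huv⟩ := I
      simp only at hI
      subst hI
      exact intv_trivial u huv
    rw [consN_triv hI, h1, one_mul]
  match l with
  | [] => rw [consN_nil hI]; simp
  | J :: t =>
    by_cases hIJ : I.1.2 = J.1.1
    · rw [consN_merge hI hIJ]
      simp only [List.map_cons, List.prod_cons]
      rw [← mul_assoc]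
      congr 1
      obtain ⟨⟨a, c⟩, hac⟩ := I
      obtain ⟨⟨c', d⟩, hcd⟩ := J
      simp only at hIJ
      subst hIJ
      exact congrArg (· * (List.map intv t).prod) (intv_mul hac hcd).symm
    · rw [consN_nomerge hI hIJ]; simp

lemma prod_normF (l : List (Iv P)) :
    ((l.foldr consN []).map intv).prod = (l.map intv).prod := by
  induction l with
  | nil => rfl
  | cons I t ih =>
    show ((consN I (t.foldr consN [])).map intv).prod = _
    rw [prod_consN, ih]
    simp

lemma mk'_eq_prod (l : List (Iv P)) :
    (conGen (intervalRel P)).mk' (FreeMonoid.ofList l) = (l.map intv).prod := by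
  induction l with
  | nil => simp; rfl
  | cons I t ih =>
    rw [FreeMonoid.ofList_cons, map_mul, ih]
    simp [intv]
    rfl

end NormalForm

/-- Every nontrivial element of the interval monoid admits a unique normal decomposition
as a product of proper intervals with non-matching target/source. -/
theorem intervalMonoid_unique_normal_decomposition (P : Type*) [PartialOrder P]
    (a : IntervalMonoid P) (ha : a ≠ 1) :
    ∃! l : List (Iv P),
      l ≠ [] ∧ (∀ I ∈ l, I.1.1 ≠ I.1.2) ∧
      l.Chain' (fun I J => I.1.2 ≠ J.1.1) ∧
      (l.map intv).prod = a := by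
  obtain ⟨w, rfl⟩ := Con.mk'_surjective (c := conGen (intervalRel P)) a
  set l₀ : List (Iv P) := w.toList.foldr consN [] with hl₀
  have hnorm : NormalL l₀ := normF_normal _
  have hprod : (l₀.map intv).prod = (conGen (intervalRel P)).mk' w := by
    rw [prod_normF]
    rw [← mk'_eq_prod]
    rfl
  have hne : l₀ ≠ [] := by
    intro h
    apply ha
    rw [← hprod, h]
    rfl
  refine ⟨l₀, ⟨hne, hnorm.1, hnorm.2, hprod⟩, ?_⟩
  rintro l ⟨-, h1, h2, h3⟩
  have hl : NormalL l := ⟨h1, h2⟩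
  -- both l and l₀ have the same image in the monoid
  have : (conGen (intervalRel P)).mk' (FreeMonoid.ofList l) =
      (conGen (intervalRel P)).mk' (FreeMonoid.ofList l₀) := by
    rw [mk'_eq_prod, mk'_eq_prod, h3, hprod]
  have hcon : (conGen (intervalRel P)) (FreeMonoid.ofList l) (FreeMonoid.ofList l₀) :=
    (Con.eq _).1 this
  have hS := conGen_le_normCon hcon []
  simp only [FreeMonoid.toList_ofList] at hS
  calc l = l.foldr consN [] := (normF_fix hl).symm
    _ = l₀.foldr consN [] := hS
    _ = l₀ := normF_fix hnorm
end

section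
/- For every poset P, the interval monoid Int(P) is a gcd-monoid if and only if P is a local lattice, i.e., for every x in P, the set of elements ≥ x is a meet-semilattice and the set of elements ≤ x is a join-semilattice. -/
attribute [reducible] Iv

namespace IvNF

variable {P : Type*} [PartialOrder P]

open scoped Classical in
noncomputable def rmul (l : List (Iv P)) (I : Iv P) : List (Iv P) :=
  if I.1.1 = I.1.2 then l else
  match l.getLast? with
  | some J => if he : J.1.2 = I.1.1 then
      l.dropLast ++ [⟨(J.1.1, I.1.2), J.2.trans (he.le.trans I.2)⟩]
    else l ++ [I]
  | none => [I]

theorem rmul_improper (l : List (Iv P)) {I : Iv P} (h : I.1.1 = I.1.2) : rmul l I = l := by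
  simp [rmul, h]

theorem rmul_nil {I : Iv P} (h : I.1.1 ≠ I.1.2) : rmul [] I = [I] := by
  simp [rmul, h]

theorem rmul_merge {l₀ : List (Iv P)} {J I : Iv P} (h : I.1.1 ≠ I.1.2)
    (he : J.1.2 = I.1.1) :
    rmul (l₀ ++ [J]) I = l₀ ++ [⟨(J.1.1, I.1.2), (J.2.trans (le_of_eq he)).trans I.2⟩] := by
  simp [rmul, h, List.getLast?_concat, he]

theorem rmul_nomerge {l₀ : List (Iv P)} {J I : Iv P} (h : I.1.1 ≠ I.1.2)
    (he : J.1.2 ≠ I.1.1) :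
    rmul (l₀ ++ [J]) I = (l₀ ++ [J]) ++ [I] := by
  simp [rmul, h, List.getLast?_concat, he]

end IvNF

namespace IvNF

variable {P : Type*} [PartialOrder P]

theorem intv_trans {x y z : P} (hxy : x ≤ y) (hyz : y ≤ z) :
    intv ⟨(x, z), hxy.trans hyz⟩ = intv ⟨(x, y), hxy⟩ * intv ⟨(y, z), hyz⟩ := by
  show (conGen (intervalRel P)).mk' _ = (conGen (intervalRel P)).mk' _ * (conGen (intervalRel P)).mk' _
  rw [← MonoidHom.map_mul]
  exact Con.eq _ |>.2 (ConGen.Rel.of _ _ (Or.inl ⟨x, y, z, hxy, hyz, rfl, rfl⟩))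

theorem intv_refl (x : P) : intv ⟨(x, x), le_refl x⟩ = 1 := by
  show (conGen (intervalRel P)).mk' _ = (conGen (intervalRel P)).mk' 1
  exact Con.eq _ |>.2 (ConGen.Rel.of _ _ (Or.inr ⟨x, rfl, rfl⟩))

theorem intv_improper {I : Iv P} (h : I.1.1 = I.1.2) : intv I = 1 := by
  obtain ⟨⟨a, b⟩, hab⟩ := I
  cases h
  exact intv_refl a

/-- The rmul action respects the defining relations. -/
theorem rmul_rmul (l : List (Iv P)) {x y z : P} (hxy : x ≤ y) (hyz : y ≤ z) :
    rmul (rmul l ⟨(x, y), hxy⟩) ⟨(y, z), hyz⟩ = rmul l ⟨(x, z), hxy.trans hyz⟩ := by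
  by_cases h1 : x = y
  · subst h1
    rw [rmul_improper l rfl]
  · by_cases h2 : y = z
    · subst h2
      rw [rmul_improper _ rfl]
    · have hxz : x ≠ z := fun h => h1 (le_antisymm hxy (hyz.trans h.ge))
      rcases List.eq_nil_or_concat l with rfl | ⟨l₀, J, rfl⟩
      · rw [rmul_nil h1, show ([⟨(x, y), hxy⟩] : List (Iv P)) = [] ++ [⟨(x, y), hxy⟩] from rfl,
          rmul_merge h2 rfl, rmul_nil hxz]
        rfl
      · simp only [List.concat_eq_append]
        by_cases hv : J.1.2 = x
        · rw [rmul_merge h1 hv, rmul_merge h2 rfl, rmul_merge hxz hv]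
        · have h1' : (⟨(x, y), hxy⟩ : Iv P).1.1 ≠ (⟨(x, y), hxy⟩ : Iv P).1.2 := h1
          rw [rmul_nomerge h1 hv, rmul_merge (l₀ := l₀ ++ [J]) h2 rfl, rmul_nomerge hxz hv]

end IvNF

namespace IvNF

variable {P : Type*} [PartialOrder P]

noncomputable def actGen (I : Iv P) : (Function.End (List (Iv P)))ᵐᵒᵖ :=
  MulOpposite.op (fun l => rmul l I)

noncomputable def act : IntervalMonoid P →* (Function.End (List (Iv P)))ᵐᵒᵖ :=
  Con.lift _ (FreeMonoid.lift actGen) (by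
    apply Con.conGen_le.2
    rintro u v (⟨x, y, z, hxy, hyz, rfl, rfl⟩ | ⟨x, rfl, rfl⟩) <;>
      rw [Con.ker_rel]
    · rw [map_mul]
      simp only [FreeMonoid.lift_eval_of]
      apply MulOpposite.unop_injective
      funext l
      exact (rmul_rmul l hxy hyz).symm
    · rw [map_one]
      simp only [FreeMonoid.lift_eval_of]
      apply MulOpposite.unop_injective
      funext l
      exact rmul_improper l rfl)

noncomputable def nf (a : IntervalMonoid P) : List (Iv P) := (act a).unop []

theorem act_intv (I : Iv P) (l : List (Iv P)) : (act (intv I)).unop l = rmul l I := by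
  rw [show act (intv I) = FreeMonoid.lift actGen (FreeMonoid.of I) from Con.lift_mk' _ _,
    FreeMonoid.lift_eval_of]
  rfl

theorem nf_mul_apply (a b : IntervalMonoid P) : nf (a * b) = (act b).unop (nf a) := by
  show (act (a * b)).unop [] = _
  rw [map_mul]
  rfl

theorem nf_one : nf (1 : IntervalMonoid P) = [] := by
  show (act 1).unop [] = []
  rw [map_one]
  rfl

theorem nf_mul_intv (a : IntervalMonoid P) (I : Iv P) : nf (a * intv I) = rmul (nf a) I := by
  rw [nf_mul_apply, act_intv]

/-- Product of intervals in the interval monoid. -/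
def IvProd (l : List (Iv P)) : IntervalMonoid P := (l.map intv).prod

@[simp] theorem IvProd_nil : IvProd ([] : List (Iv P)) = 1 := rfl

theorem IvProd_append (l₁ l₂ : List (Iv P)) : IvProd (l₁ ++ l₂) = IvProd l₁ * IvProd l₂ := by
  simp [IvProd]

theorem IvProd_rmul (l : List (Iv P)) (I : Iv P) : IvProd (rmul l I) = IvProd l * intv I := by
  by_cases h : I.1.1 = I.1.2
  · rw [rmul_improper l h, intv_improper h, mul_one]
  · rcases List.eq_nil_or_concat l with rfl | ⟨l₀, J, rfl⟩
    · rw [rmul_nil h]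
      simp [IvProd]
    · simp only [List.concat_eq_append]
      by_cases hv : J.1.2 = I.1.1
      · obtain ⟨⟨a, b⟩, hab⟩ := J
        obtain ⟨⟨c, d⟩, hcd⟩ := I
        simp only at hv h
        subst hv
        rw [rmul_merge h rfl, IvProd_append, IvProd_append]
        simp only [IvProd, List.map_cons, List.map_nil, List.prod_cons, List.prod_nil, mul_one]
        rw [show intv ⟨(a, d), le_trans hab hcd⟩ = intv ⟨(a, b), hab⟩ * intv ⟨(b, d), hcd⟩
          from intv_trans hab hcd, mul_assoc]
      · rw [rmul_nomerge h hv, IvProd_append]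
        simp [IvProd]

theorem mk'_ofList (L : List (Iv P)) :
    (conGen (intervalRel P)).mk' (FreeMonoid.ofList L) = IvProd L := by
  induction L with
  | nil => rfl
  | cons I L ih =>
    rw [FreeMonoid.ofList_cons, map_mul, ih]
    rfl

theorem exists_rep (a : IntervalMonoid P) : ∃ L : List (Iv P), a = IvProd L := by
  induction a using Con.induction_on with
  | H w => exact ⟨FreeMonoid.toList w, by rw [← mk'_ofList]; rfl⟩

theorem IvProd_nf (a : IntervalMonoid P) : IvProd (nf a) = a := by
  obtain ⟨L, rfl⟩ := exists_rep a
  induction L using List.reverseRecOn with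
  | nil => rw [IvProd_nil, nf_one, IvProd_nil]
  | append_singleton L I ih =>
    rw [IvProd_append, show IvProd [I] = intv I * 1 from rfl, mul_one, nf_mul_intv,
      IvProd_rmul, ih]

theorem nf_injective : Function.Injective (nf (P := P)) := fun a b h => by
  rw [← IvProd_nf a, ← IvProd_nf b, h]

/-- Normality of a list of intervals. -/
def Nrm (l : List (Iv P)) : Prop :=
  (∀ I ∈ l, I.1.1 ≠ I.1.2) ∧ l.IsChain (fun I J => I.1.2 ≠ J.1.1)

theorem Nrm_nil : Nrm ([] : List (Iv P)) := ⟨by simp, List.isChain_nil⟩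

theorem Nrm.rmul {l : List (Iv P)} (hl : Nrm l) (I : Iv P) : Nrm (rmul l I) := by
  by_cases h : I.1.1 = I.1.2
  · rwa [rmul_improper l h]
  · rcases List.eq_nil_or_concat l with rfl | ⟨l₀, J, rfl⟩
    · rw [rmul_nil h]
      exact ⟨by simpa using h, List.isChain_singleton _⟩
    · simp only [List.concat_eq_append] at hl ⊢
      obtain ⟨hl1, hl2⟩ := hl
      rw [List.isChain_append] at hl2
      by_cases hv : J.1.2 = I.1.1
      · rw [rmul_merge h hv]
        have hJ : J.1.1 ≠ J.1.2 := hl1 J (by simp)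
        constructor
        · intro K hK
          rcases List.mem_append.1 hK with hK | hK
          · exact hl1 K (List.mem_append.2 (Or.inl hK))
          · simp only [List.mem_singleton] at hK
            subst hK
            intro hc
            exact hJ (le_antisymm J.2 ((hv.le.trans I.2).trans hc.ge))
        · rw [List.isChain_append]
          exact ⟨hl2.1, List.isChain_singleton _, fun x hx y hy => by
            simp only [List.head?_cons, Option.mem_some_iff] at hy
            subst hy
            exact hl2.2.2 x hx J rfl⟩
      · rw [rmul_nomerge h hv]
        constructor
        · intro K hK
          rcases List.mem_append.1 hK with hK | hK
          · exact hl1 K hK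
          · simp only [List.mem_singleton] at hK; subst hK; exact h
        · rw [List.isChain_append]
          refine ⟨List.isChain_append.2 hl2, List.isChain_singleton _, fun x hx y hy => ?_⟩
          simp only [List.head?_cons, Option.mem_some_iff] at hy
          subst hy
          rw [List.getLast?_concat] at hx
          simp only [Option.mem_some_iff] at hx
          subst hx
          exact hv

theorem Nrm.nf (a : IntervalMonoid P) : Nrm (nf a) := by
  obtain ⟨L, rfl⟩ := exists_rep a
  induction L using List.reverseRecOn with
  | nil => rw [IvProd_nil, nf_one]; exact Nrm_nil
  | append_singleton L I ih =>
    rw [IvProd_append, show IvProd [I] = intv I * 1 from rfl, mul_one, nf_mul_intv]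
    exact ih.rmul I

/-- Multiplication of normal forms. -/
noncomputable def smul (L M : List (Iv P)) : List (Iv P) := M.foldl rmul L

theorem act_IvProd (l : List (Iv P)) : ∀ L, (act (IvProd l)).unop L = List.foldl rmul L l := by
  induction l with
  | nil =>
    intro L
    show (act 1).unop L = L
    rw [map_one]; rfl
  | cons I l ih =>
    intro L
    have : IvProd (I :: l) = intv I * IvProd l := by simp [IvProd]
    rw [this, map_mul]
    show (act (IvProd l)).unop ((act (intv I)).unop L) = _
    rw [act_intv, ih]
    rfl

theorem nf_mul (a b : IntervalMonoid P) : nf (a * b) = smul (nf a) (nf b) := by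
  conv_lhs => rw [nf_mul_apply, ← IvProd_nf b]
  rw [act_IvProd]
  rfl

theorem foldl_eq_append : ∀ (L M : List (Iv P)), Nrm (M ++ L) → List.foldl rmul M L = M ++ L := by
  intro L
  induction L with
  | nil => intro M _; simp
  | cons I L ih =>
    intro M hM
    have hI : I.1.1 ≠ I.1.2 := hM.1 I (by simp)
    have h1 : rmul M I = M ++ [I] := by
      rcases List.eq_nil_or_concat M with rfl | ⟨M₀, J, rfl⟩
      · rw [rmul_nil hI]; rfl
      · rw [List.concat_eq_append] at hM ⊢
        refine rmul_nomerge hI ?_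
        have := hM.2
        rw [List.isChain_append] at this
        exact this.2.2 J (by rw [List.getLast?_concat]; rfl) I rfl
    show List.foldl rmul (rmul M I) L = M ++ I :: L
    rw [h1, ih (M ++ [I]) (by simpa using hM)]
    simp

theorem smul_nil_left {L : List (Iv P)} (hL : Nrm L) : smul [] L = L :=
  foldl_eq_append L [] (by simpa using hL)

@[simp] theorem smul_nil_right (L : List (Iv P)) : smul L [] = L := rfl

theorem nf_IvProd {L : List (Iv P)} (hL : Nrm L) : nf (IvProd L) = L := by
  show (act (IvProd L)).unop [] = L
  rw [act_IvProd]
  exact smul_nil_left hL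

theorem smul_merge {L₀ M₁ : List (Iv P)} {J I : Iv P} (hL : Nrm (L₀ ++ [J]))
    (hM : Nrm (I :: M₁)) (he : J.1.2 = I.1.1) :
    smul (L₀ ++ [J]) (I :: M₁) =
      L₀ ++ ⟨(J.1.1, I.1.2), (J.2.trans he.le).trans I.2⟩ :: M₁ := by
  have hI : I.1.1 ≠ I.1.2 := hM.1 I (by simp)
  show List.foldl rmul (rmul (L₀ ++ [J]) I) M₁ = _
  rw [rmul_merge hI he]
  have hnrm : Nrm ((L₀ ++ [⟨(J.1.1, I.1.2), (J.2.trans he.le).trans I.2⟩]) ++ M₁) := by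
    have hmerge : Nrm (L₀ ++ [⟨(J.1.1, I.1.2), (J.2.trans he.le).trans I.2⟩]) := by
      have := hL.rmul I
      rwa [rmul_merge hI he] at this
    constructor
    · intro K hK
      rcases List.mem_append.1 hK with hK | hK
      · exact hmerge.1 K hK
      · exact hM.1 K (List.mem_cons_of_mem I hK)
    · rw [List.isChain_append]
      refine ⟨hmerge.2, (List.isChain_cons.1 hM.2).2, fun x hx y hy => ?_⟩
      rw [List.getLast?_concat] at hx
      simp only [Option.mem_some_iff] at hx
      subst hx
      exact (List.isChain_cons.1 hM.2).1 y hy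
  calc List.foldl rmul (L₀ ++ [⟨(J.1.1, I.1.2), (J.2.trans he.le).trans I.2⟩]) M₁
      = (L₀ ++ [⟨(J.1.1, I.1.2), (J.2.trans he.le).trans I.2⟩]) ++ M₁ :=
        foldl_eq_append _ _ hnrm
    _ = _ := by simp

theorem smul_nomerge {L₀ M₁ : List (Iv P)} {J I : Iv P} (hL : Nrm (L₀ ++ [J]))
    (hM : Nrm (I :: M₁)) (he : J.1.2 ≠ I.1.1) :
    smul (L₀ ++ [J]) (I :: M₁) = (L₀ ++ [J]) ++ I :: M₁ := by
  have hI : I.1.1 ≠ I.1.2 := hM.1 I (by simp)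
  show List.foldl rmul (rmul (L₀ ++ [J]) I) M₁ = _
  rw [rmul_nomerge hI he]
  have hnrm : Nrm (((L₀ ++ [J]) ++ [I]) ++ M₁) := by
    constructor
    · intro K hK
      simp only [List.append_assoc, List.mem_append, List.mem_singleton] at hK
      rcases hK with hK | hK | hK | hK
      · exact hL.1 K (List.mem_append.2 (Or.inl hK))
      · exact hL.1 K (by simp [hK])
      · subst hK; exact hI
      · exact hM.1 K (List.mem_cons_of_mem I hK)
    · rw [List.isChain_append, List.isChain_append]
      refine ⟨⟨hL.2, List.isChain_singleton _, fun x hx y hy => ?_⟩,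
        (List.isChain_cons.1 hM.2).2, fun x hx y hy => ?_⟩
      · simp only [List.head?_cons, Option.mem_some_iff] at hy
        subst hy
        simp only [Option.mem_def] at hx
        rw [List.getLast?_concat] at hx
        cases hx
        exact he
      · rw [List.getLast?_concat] at hx
        simp only [Option.mem_some_iff] at hx
        subst hx
        exact (List.isChain_cons.1 hM.2).1 y hy
  calc List.foldl rmul ((L₀ ++ [J]) ++ [I]) M₁ = ((L₀ ++ [J]) ++ [I]) ++ M₁ :=
        foldl_eq_append _ _ hnrm
    _ = _ := by simp

theorem Nrm.of_append {X Y : List (Iv P)} (h : Nrm (X ++ Y)) : Nrm X ∧ Nrm Y := by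
  obtain ⟨h1, h2⟩ := h
  rw [List.isChain_append] at h2
  exact ⟨⟨fun I hI => h1 I (List.mem_append.2 (Or.inl hI)), h2.1⟩,
    ⟨fun I hI => h1 I (List.mem_append.2 (Or.inr hI)), h2.2.1⟩⟩

theorem Nrm.of_cons {I : Iv P} {L : List (Iv P)} (h : Nrm (I :: L)) : Nrm L :=
  (Nrm.of_append (X := [I]) h).2

theorem nrm_rel_mid {D₀ A₂ : List (Iv P)} {X I : Iv P} (h : Nrm (D₀ ++ X :: I :: A₂)) :
    X.1.2 ≠ I.1.1 := by
  have := (Nrm.of_append h).2.2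
  exact (List.isChain_cons_cons.1 this).1

theorem concat_inj {X Y : List (Iv P)} {a b : Iv P} (h : X ++ [a] = Y ++ [b]) :
    X = Y ∧ a = b := by
  have h' := congrArg List.reverse h
  simp only [List.reverse_append, List.reverse_singleton, List.singleton_append] at h'
  obtain ⟨h1, h2⟩ := List.cons.injEq _ _ _ _ ▸ h'
  exact ⟨by simpa using congrArg List.reverse h2, h1⟩

/-- Left divisibility of normal lists. -/
def LDiv (D A : List (Iv P)) : Prop := ∃ C, Nrm C ∧ smul D C = A

/-- Right divisibility of normal lists. -/
def RDiv (D A : List (Iv P)) : Prop := ∃ C, Nrm C ∧ smul C D = A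

theorem ldiv_iff {D A : List (Iv P)} (hD : Nrm D) (hA : Nrm A) :
    LDiv D A ↔ D = [] ∨ ∃ (D₀ A₁ : List (Iv P)) (w v y : P) (hwv : w ≤ v) (hwy : w ≤ y),
      D = D₀ ++ [⟨(w, v), hwv⟩] ∧ A = D₀ ++ ⟨(w, y), hwy⟩ :: A₁ ∧ v ≤ y := by
  constructor
  · rintro ⟨C, hC, rfl⟩
    rcases List.eq_nil_or_concat D with rfl | ⟨D₀, J, rfl⟩
    · exact Or.inl rfl
    · rw [List.concat_eq_append] at hD ⊢
      right
      rcases C with _ | ⟨I, C₁⟩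
      · exact ⟨D₀, [], J.1.1, J.1.2, J.1.2, J.2, J.2, rfl, rfl, le_refl _⟩
      · by_cases he : J.1.2 = I.1.1
        · rw [smul_merge hD hC he]
          exact ⟨D₀, C₁, J.1.1, J.1.2, I.1.2, J.2, (J.2.trans he.le).trans I.2, rfl, rfl,
            he.le.trans I.2⟩
        · rw [smul_nomerge hD hC he]
          exact ⟨D₀, I :: C₁, J.1.1, J.1.2, J.1.2, J.2, J.2, rfl, by simp, le_refl _⟩
  · rintro (rfl | ⟨D₀, A₁, w, v, y, hwv, hwy, rfl, rfl, hvy⟩)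
    · exact ⟨A, hA, smul_nil_left hA⟩
    · by_cases hv : v = y
      · subst hv
        refine ⟨A₁, (Nrm.of_append (X := D₀ ++ [⟨(w, v), hwy⟩])
          (by simpa using hA)).2, ?_⟩
        rcases A₁ with _ | ⟨I, A₂⟩
        · rfl
        · rw [smul_nomerge hD ((Nrm.of_append (X := D₀ ++ [⟨(w, v), hwy⟩])
            (by simpa using hA)).2) (nrm_rel_mid hA)]
          simp
      · have hCn : Nrm (⟨(v, y), hvy⟩ :: A₁) := by
          have hA2 := (Nrm.of_append (X := D₀) hA).2
          constructor
          · intro K hK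
            rcases List.mem_cons.1 hK with rfl | hK
            · exact hv
            · exact hA2.1 K (List.mem_cons_of_mem _ hK)
          · exact List.isChain_cons.2 ⟨fun z hz => (List.isChain_cons.1 hA2.2).1 z hz,
              (List.isChain_cons.1 hA2.2).2⟩
        exact ⟨_, hCn, by rw [smul_merge hD hCn rfl]⟩

theorem ldiv_nil {E : List (Iv P)} (hE : Nrm E) (h : LDiv E []) : E = [] := by
  rcases (ldiv_iff hE Nrm_nil).1 h with rfl | ⟨D₀, A₁, w, v, y, hwv, hwy, rfl, hh, hvy⟩
  · rfl
  · exact absurd hh (by simp)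

theorem ldiv_refl {A : List (Iv P)} (hA : Nrm A) : LDiv A A := ⟨[], Nrm_nil, rfl⟩

theorem ldiv_nil_left {A : List (Iv P)} (hA : Nrm A) : LDiv [] A := ⟨A, hA, smul_nil_left hA⟩

theorem smul_eq_nil {L M : List (Iv P)} (hL : Nrm L) (hM : Nrm M) (h : smul L M = []) :
    L = [] ∧ M = [] := by
  rcases List.eq_nil_or_concat L with rfl | ⟨L₀, J, rfl⟩
  · exact ⟨rfl, by rwa [smul_nil_left hM] at h⟩
  · rw [List.concat_eq_append] at hL h
    rcases M with _ | ⟨I, M₁⟩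
    · exact absurd h (by simp)
    · by_cases he : J.1.2 = I.1.1
      · rw [smul_merge hL hM he] at h
        exact absurd h (by simp)
      · rw [smul_nomerge hL hM he] at h
        exact absurd h (by simp)

theorem smul_left_cancel {L M M' : List (Iv P)} (hL : Nrm L) (hM : Nrm M) (hM' : Nrm M')
    (h : smul L M = smul L M') : M = M' := by
  rcases List.eq_nil_or_concat L with rfl | ⟨L₀, J, rfl⟩
  · rwa [smul_nil_left hM, smul_nil_left hM'] at h
  · rw [List.concat_eq_append] at hL h
    have key : ∀ (N N' : List (Iv P)), Nrm N → Nrm N' → N = [] → N' ≠ [] →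
        smul (L₀ ++ [J]) N ≠ smul (L₀ ++ [J]) N' := by
      rintro N N' hN hN' rfl hne
      rcases N' with _ | ⟨I, N₁⟩
      · exact absurd rfl hne
      · by_cases he : J.1.2 = I.1.1
        · rw [smul_nil_right, smul_merge hL hN' he]
          intro hc
          have hlen := congrArg List.length hc
          simp only [List.length_append, List.length_cons, List.length_nil] at hlen
          have hN₁ : N₁ = [] := List.length_eq_zero_iff.1 (by omega)
          subst hN₁
          have hJ : J = ⟨(J.1.1, I.1.2), (J.2.trans he.le).trans I.2⟩ := by
            simpa using hc
          have h3 : J.1.2 = I.1.2 := by rw [hJ]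
          exact hN'.1 I (by simp) (he.symm.trans h3)
        · rw [smul_nil_right, smul_nomerge hL hN' he]
          intro hc
          have hlen := congrArg List.length hc
          simp at hlen
    rcases M with _ | ⟨I, M₁⟩ <;> rcases M' with _ | ⟨I', M₁'⟩
    · rfl
    · exact absurd h (key _ _ hM hM' rfl (by simp))
    · exact absurd h.symm (key _ _ hM' hM rfl (by simp))
    · by_cases he : J.1.2 = I.1.1 <;> by_cases he' : J.1.2 = I'.1.1
      · rw [smul_merge hL hM he, smul_merge hL hM' he'] at h
        have h2 := List.append_cancel_left h
        rw [List.cons.injEq] at h2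
        obtain ⟨h21, h22⟩ := h2
        have hsnd : I.1.2 = I'.1.2 := congrArg (fun K => K.1.2) h21
        have hfst : I.1.1 = I'.1.1 := he ▸ he'
        rw [h22, show I = I' from Subtype.ext (Prod.ext hfst hsnd)]
      · rw [smul_merge hL hM he, smul_nomerge hL hM' he'] at h
        rw [show (L₀ ++ [J]) ++ I' :: M₁' = L₀ ++ J :: I' :: M₁' by simp] at h
        have h2 := List.append_cancel_left h
        rw [List.cons.injEq] at h2
        have : I.1.2 = J.1.2 := congrArg (fun K => K.1.2) h2.1
        exact absurd (this.trans he).symm (hM.1 I (by simp))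
      · rw [smul_nomerge hL hM he, smul_merge hL hM' he'] at h
        rw [show (L₀ ++ [J]) ++ I :: M₁ = L₀ ++ J :: I :: M₁ by simp] at h
        have h2 := List.append_cancel_left h
        rw [List.cons.injEq] at h2
        have : I'.1.2 = J.1.2 := congrArg (fun K => K.1.2) h2.1.symm
        exact absurd (this.trans he').symm (hM'.1 I' (by simp))
      · rw [smul_nomerge hL hM he, smul_nomerge hL hM' he'] at h
        exact List.append_cancel_left (as := L₀ ++ [J]) h

/-! ### Duality -/

def ivRev (I : Iv P) : Iv Pᵒᵈ :=
  ⟨(OrderDual.toDual I.1.2, OrderDual.toDual I.1.1), I.2⟩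

def ivVer (K : Iv Pᵒᵈ) : Iv P :=
  ⟨(OrderDual.ofDual K.1.2, OrderDual.ofDual K.1.1), K.2⟩

@[simp] theorem ivVer_ivRev (I : Iv P) : ivVer (ivRev I) = I := rfl

@[simp] theorem ivRev_ivVer (K : Iv Pᵒᵈ) : ivRev (ivVer K) = K := rfl

def lrev (L : List (Iv P)) : List (Iv Pᵒᵈ) := (L.map ivRev).reverse

def lver (L : List (Iv Pᵒᵈ)) : List (Iv P) := (L.map ivVer).reverse

@[simp] theorem lver_lrev (L : List (Iv P)) : lver (lrev L) = L := by
  simp [lrev, lver, List.map_reverse, List.map_map, Function.comp_def]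

@[simp] theorem lrev_lver (L : List (Iv Pᵒᵈ)) : lrev (lver L) = L := by
  simp [lrev, lver, List.map_reverse, List.map_map, Function.comp_def]

theorem lrev_append (X Y : List (Iv P)) : lrev (X ++ Y) = lrev Y ++ lrev X := by
  simp [lrev]

theorem lrev_cons (I : Iv P) (X : List (Iv P)) : lrev (I :: X) = lrev X ++ [ivRev I] := by
  simp [lrev]

@[simp] theorem lrev_nil : lrev ([] : List (Iv P)) = [] := rfl

theorem Nrm.lrev {L : List (Iv P)} (hL : Nrm L) : Nrm (lrev L) := by
  constructor
  · intro K hK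
    simp only [IvNF.lrev, List.mem_reverse, List.mem_map] at hK
    obtain ⟨I, hI, rfl⟩ := hK
    exact fun hc => hL.1 I hI hc.symm
  · rw [IvNF.lrev, List.isChain_reverse, List.isChain_map]
    exact List.IsChain.imp (fun I J h => fun hc => h hc.symm) hL.2

theorem Nrm.lver {L : List (Iv Pᵒᵈ)} (hL : Nrm L) : Nrm (lver L) := by
  constructor
  · intro K hK
    simp only [IvNF.lver, List.mem_reverse, List.mem_map] at hK
    obtain ⟨I, hI, rfl⟩ := hK
    exact fun hc => hL.1 I hI hc.symm
  · rw [IvNF.lver, List.isChain_reverse, List.isChain_map]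
    exact List.IsChain.imp (fun I J h => fun hc => h hc.symm) hL.2

theorem smul_lrev {L M : List (Iv P)} (hL : Nrm L) (hM : Nrm M) :
    smul (lrev M) (lrev L) = lrev (smul L M) := by
  rcases List.eq_nil_or_concat L with rfl | ⟨L₀, J, rfl⟩
  · rw [lrev_nil, smul_nil_right, smul_nil_left hM]
  · rw [List.concat_eq_append] at hL ⊢
    rcases M with _ | ⟨I, M₁⟩
    · rw [lrev_nil, smul_nil_right, smul_nil_left hL.lrev]
    · have hrevL : lrev (L₀ ++ [J]) = ivRev J :: lrev L₀ := by simp [lrev]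
      have hrevM : lrev (I :: M₁) = lrev M₁ ++ [ivRev I] := lrev_cons I M₁
      by_cases he : J.1.2 = I.1.1
      · rw [smul_merge hL hM he, hrevM, hrevL,
          smul_merge (hrevM ▸ hM.lrev) (hrevL ▸ hL.lrev) (show (ivRev I).1.2 = (ivRev J).1.1 from he.symm)]
        simp only [lrev, ivRev, List.map_append, List.map_cons, List.reverse_append,
          List.reverse_cons, List.map_nil, List.reverse_nil, List.nil_append,
          List.append_assoc, List.singleton_append, List.cons_append]
      · rw [smul_nomerge hL hM he, hrevM, hrevL,
          smul_nomerge (hrevM ▸ hM.lrev) (hrevL ▸ hL.lrev)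
            (show (ivRev I).1.2 ≠ (ivRev J).1.1 from fun hc => he hc.symm)]
        simp [lrev]

theorem lrev_injective : Function.Injective (lrev (P := P)) := fun X Y h => by
  have := congrArg lver h
  simpa using this

theorem rdiv_iff_ldiv {D A : List (Iv P)} (hD : Nrm D) (hA : Nrm A) :
    RDiv D A ↔ LDiv (lrev D) (lrev A) := by
  constructor
  · rintro ⟨C, hC, rfl⟩
    exact ⟨lrev C, hC.lrev, smul_lrev hC hD⟩
  · rintro ⟨C, hC, hsm⟩
    refine ⟨lver C, hC.lver, ?_⟩
    apply lrev_injective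
    rw [← smul_lrev (hC.lver) hD, lrev_lver, hsm]

theorem smul_right_cancel {L M M' : List (Iv P)} (hL : Nrm L) (hM : Nrm M) (hM' : Nrm M')
    (h : smul M L = smul M' L) : M = M' := by
  apply lrev_injective
  apply smul_left_cancel hL.lrev hM.lrev hM'.lrev
  rw [smul_lrev hM hL, smul_lrev hM' hL, h]

theorem ldvd_iff_ldiv (d a : IntervalMonoid P) : LDvd d a ↔ LDiv (nf d) (nf a) := by
  constructor
  · rintro ⟨c, rfl⟩
    exact ⟨nf c, Nrm.nf c, (nf_mul d c).symm⟩
  · rintro ⟨C, hC, hsm⟩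
    refine ⟨IvProd C, nf_injective ?_⟩
    rw [nf_mul, nf_IvProd hC, hsm]

theorem rdvd_iff_rdiv (d a : IntervalMonoid P) : RDvd d a ↔ RDiv (nf d) (nf a) := by
  constructor
  · rintro ⟨c, rfl⟩
    exact ⟨nf c, Nrm.nf c, (nf_mul c d).symm⟩
  · rintro ⟨C, hC, hsm⟩
    refine ⟨IvProd C, nf_injective ?_⟩
    rw [nf_mul, nf_IvProd hC, hsm]

theorem cancellative_intervalMonoid : Cancellative (IntervalMonoid P) := by
  constructor
  · intro a b c h
    apply nf_injective
    apply smul_left_cancel (Nrm.nf a) (Nrm.nf b) (Nrm.nf c)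
    rw [← nf_mul, ← nf_mul, h]
  · intro a b c h
    apply nf_injective
    apply smul_right_cancel (Nrm.nf a) (Nrm.nf b) (Nrm.nf c)
    rw [← nf_mul, ← nf_mul, h]

theorem trivialUnits_intervalMonoid : TrivialUnits (IntervalMonoid P) := by
  intro a ha
  obtain ⟨u, rfl⟩ := ha
  have h1 : (u.val : IntervalMonoid P) * u.inv = 1 := u.val_inv
  have h2 : smul (nf u.val) (nf u.inv) = [] := by rw [← nf_mul, h1, nf_one]
  have h3 := (smul_eq_nil (Nrm.nf _) (Nrm.nf _) h2).1
  have : (u.val : IntervalMonoid P) = IvProd (nf u.val) := (IvProd_nf _).symm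
  rw [this, h3, IvProd_nil]

theorem ldiv_cons_lift {I : Iv P} {D A₁ : List (Iv P)} (hID : Nrm (I :: D))
    (hIA : Nrm (I :: A₁)) (h : LDiv D A₁) : LDiv (I :: D) (I :: A₁) := by
  rcases (ldiv_iff hID.of_cons hIA.of_cons).1 h with rfl | ⟨D₀, A₂, w, v, y, hwv, hwy, rfl, hAeq, hvy⟩
  · exact (ldiv_iff hID hIA).2 (Or.inr ⟨[], A₁, I.1.1, I.1.2, I.1.2, I.2, I.2, rfl, rfl, le_refl _⟩)
  · exact (ldiv_iff hID hIA).2 (Or.inr ⟨I :: D₀, A₂, w, v, y, hwv, hwy, rfl, by rw [hAeq]; rfl, hvy⟩)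

theorem ldiv_cons_unlift {I : Iv P} {E₁ A₁ : List (Iv P)} (hIE : Nrm (I :: E₁))
    (hIA : Nrm (I :: A₁)) (h : LDiv (I :: E₁) (I :: A₁)) : LDiv E₁ A₁ := by
  rcases (ldiv_iff hIE hIA).1 h with habs | ⟨E₀, A₂, w, v, y, hwv, hwy, hEeq, hAeq, hvy⟩
  · exact absurd habs (by simp)
  · rcases E₀ with _ | ⟨K, E₀₁⟩
    · have hE₁ : E₁ = [] := by
        have := congrArg List.tail hEeq
        simpa using this
      subst hE₁
      exact ldiv_nil_left hIA.of_cons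
    · simp only [List.cons_append, List.cons.injEq] at hEeq hAeq
      exact (ldiv_iff hIE.of_cons hIA.of_cons).2
        (Or.inr ⟨E₀₁, A₂, w, v, y, hwv, hwy, hEeq.2, hAeq.2, hvy⟩)

def MeetCond (P : Type*) [PartialOrder P] : Prop :=
  ∀ x a b : P, x ≤ a → x ≤ b →
    ∃ m, x ≤ m ∧ m ≤ a ∧ m ≤ b ∧ ∀ c, x ≤ c → c ≤ a → c ≤ b → c ≤ m

def LGcdCond (P : Type*) [PartialOrder P] : Prop :=
  ∀ A B : List (Iv P), Nrm A → Nrm B → ∃ D, Nrm D ∧ LDiv D A ∧ LDiv D B ∧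
    ∀ E, Nrm E → LDiv E A → LDiv E B → LDiv E D

theorem lgcd_aux (hm : MeetCond P) : ∀ (A B : List (Iv P)), Nrm A → Nrm B →
    ∃ D, Nrm D ∧ LDiv D A ∧ LDiv D B ∧
      (∀ K ∈ D.head?, ∀ K' ∈ A.head?, K.1.1 = K'.1.1) ∧
      ∀ E, Nrm E → LDiv E A → LDiv E B → LDiv E D := by
  intro A
  induction A with
  | nil =>
    intro B hA hB
    refine ⟨[], Nrm_nil, ldiv_refl Nrm_nil, ldiv_nil_left hB, by simp, ?_⟩
    intro E hE hEA _
    rw [ldiv_nil hE hEA]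
    exact ldiv_refl Nrm_nil
  | cons I A₁ ih =>
    intro B hA hB
    rcases B with _ | ⟨J, B₁⟩
    · refine ⟨[], Nrm_nil, ldiv_nil_left hA, ldiv_refl Nrm_nil, by simp, ?_⟩
      intro E hE _ hEB
      rw [ldiv_nil hE hEB]
      exact ldiv_refl Nrm_nil
    · -- both nonempty
      by_cases hw : I.1.1 = J.1.1
      · by_cases hIJ : I = J
        · subst hIJ
          obtain ⟨D, hD, hDA, hDB, hDhead, hDuniv⟩ := ih B₁ hA.of_cons hB.of_cons
          have hID : Nrm (I :: D) := by
            refine ⟨?_, ?_⟩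
            · intro K hK
              rcases List.mem_cons.1 hK with rfl | hK
              · exact hA.1 K (by simp)
              · exact hD.1 K hK
            · refine List.isChain_cons.2 ⟨?_, hD.2⟩
              intro z hz
              rcases D with _ | ⟨z', D'⟩
              · simp at hz
              · simp only [List.head?_cons, Option.mem_some_iff] at hz
                rcases A₁ with _ | ⟨K', A₂⟩
                · have hnil : (z' :: D') = [] := ldiv_nil hD hDA
                  simp at hnil
                · have h1 : z'.1.1 = K'.1.1 := hDhead z' rfl K' rfl
                  have h2 : I.1.2 ≠ K'.1.1 := (List.isChain_cons_cons.1 hA.2).1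
                  rw [← hz, h1]
                  exact h2
          refine ⟨I :: D, hID, ldiv_cons_lift hID hA hDA, ldiv_cons_lift hID hB hDB,
            by simp, ?_⟩
          intro E hE hEA hEB
          rcases (ldiv_iff hE hA).1 hEA with rfl | ⟨E₀, A₂, w, v, y, hwv, hwy, hEeq, hAeq, hvy⟩
          · exact ldiv_nil_left hID
          · rcases E₀ with _ | ⟨K, E₀₁⟩
            · -- E = [⟨(w,v)⟩], I = ⟨(w,y)⟩
              simp only [List.nil_append, List.cons.injEq] at hAeq
              obtain ⟨hIwy, -⟩ := hAeq
              have hIw : I.1.1 = w := by rw [hIwy]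
              have hIy : I.1.2 = y := by rw [hIwy]
              subst hEeq
              refine (ldiv_iff hE hID).2 (Or.inr ⟨[], D, w, v, I.1.2, hwv,
                hIw ▸ I.2, rfl, ?_, hIy ▸ hvy⟩)
              simp only [List.nil_append, List.cons.injEq]
              exact ⟨Subtype.ext (Prod.ext hIw rfl), trivial⟩
            · -- E = I :: (E₀₁ ++ [last])
              simp only [List.cons_append, List.cons.injEq] at hAeq
              obtain ⟨hIK, hA1eq⟩ := hAeq
              subst hIK
              rw [hEeq] at hE hEA hEB ⊢
              have hE₁ : Nrm (E₀₁ ++ [⟨(w, v), hwv⟩]) := hE.of_cons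
              have h1 : LDiv (E₀₁ ++ [⟨(w, v), hwv⟩]) A₁ := ldiv_cons_unlift hE hA hEA
              have h2 : LDiv (E₀₁ ++ [⟨(w, v), hwv⟩]) B₁ := ldiv_cons_unlift hE hB hEB
              exact ldiv_cons_lift hE hID (hDuniv _ hE₁ h1 h2)
        · -- same start, different intervals
          have hvv : I.1.2 ≠ J.1.2 := fun hc => hIJ (Subtype.ext (Prod.ext hw hc))
          obtain ⟨m, hm1, hm2, hm3, hm4⟩ := hm I.1.1 I.1.2 J.1.2 I.2 (hw.le.trans J.2)
          -- helper: any common divisor is [] or [⟨(I.1.1,t)⟩] with t ≤ I.1.2, t ≤ J.1.2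
          have key : ∀ E, Nrm E → LDiv E (I :: A₁) → LDiv E (J :: B₁) →
              E = [] ∨ ∃ (t : P) (h1 : I.1.1 ≤ t), E = [⟨(I.1.1, t), h1⟩] ∧
                I.1.1 ≠ t ∧ t ≤ I.1.2 ∧ t ≤ J.1.2 := by
            intro E hE hEA hEB
            rcases (ldiv_iff hE hA).1 hEA with rfl | ⟨E₀, A₂, w', v', y', hwv', hwy', hEeq, hAeq, hvy'⟩
            · exact Or.inl rfl
            rcases (ldiv_iff hE hB).1 hEB with habs | ⟨F₀, B₂, w₂, v₂, y₂, hwv₂, hwy₂, hFeq, hBeq, hvy₂⟩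
            · rw [habs] at hEeq
              exact absurd hEeq.symm (by simp)
            obtain ⟨hE₀F₀, hlast⟩ := concat_inj (hEeq.symm.trans hFeq)
            rcases E₀ with _ | ⟨K, E₀₁⟩
            · right
              simp only [List.nil_append, List.cons.injEq] at hAeq
              obtain ⟨hIwy, -⟩ := hAeq
              subst hE₀F₀
              simp only [List.nil_append, List.cons.injEq] at hBeq
              obtain ⟨hJwy, -⟩ := hBeq
              have hw1 : w' = I.1.1 := by rw [hIwy]
              have hy1 : y' = I.1.2 := by rw [hIwy]
              have hw2 : w₂ = J.1.1 := by rw [hJwy]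
              have hy2 : y₂ = J.1.2 := by rw [hJwy]
              have hv12 : v' = v₂ := congrArg (fun K : Iv P => K.1.2) hlast
              refine ⟨v', hw1 ▸ hwv', ?_, ?_, hy1 ▸ hvy', hy2 ▸ hv12 ▸ hvy₂⟩
              · rw [hEeq]
                simp only [List.nil_append, List.cons.injEq]
                exact ⟨Subtype.ext (Prod.ext hw1 rfl), trivial⟩
              · intro hc
                have hne : w' ≠ v' := hE.1 ⟨(w', v'), hwv'⟩ (by rw [hEeq]; simp)
                exact hne (hw1.trans hc)
            · exfalso
              subst hE₀F₀
              simp only [List.cons_append, List.cons.injEq] at hAeq hBeq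
              exact hIJ (hAeq.1.trans hBeq.1.symm)
          by_cases hmx : I.1.1 = m
          · refine ⟨[], Nrm_nil, ldiv_nil_left hA, ldiv_nil_left hB, by simp, ?_⟩
            intro E hE hEA hEB
            rcases key E hE hEA hEB with rfl | ⟨t, h1, rfl, h2, h3, h4⟩
            · exact ldiv_refl Nrm_nil
            · exact absurd (le_antisymm (hmx ▸ hm4 t h1 h3 h4) h1) (Ne.symm h2)
          · have hDn : Nrm [⟨(I.1.1, m), hm1⟩] := ⟨by simpa using hmx, List.isChain_singleton _⟩
            refine ⟨[⟨(I.1.1, m), hm1⟩], hDn, ?_, ?_, ?_, ?_⟩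
            · exact (ldiv_iff hDn hA).2 (Or.inr ⟨[], A₁, I.1.1, m, I.1.2, hm1, I.2, rfl, rfl, hm2⟩)
            · refine (ldiv_iff hDn hB).2 (Or.inr ⟨[], B₁, I.1.1, m, J.1.2, hm1,
                hw.le.trans J.2, rfl, ?_, hm3⟩)
              simp only [List.nil_append, List.cons.injEq]
              exact ⟨Subtype.ext (Prod.ext hw.symm rfl), trivial⟩
            · intro K hK K' hK'
              simp only [List.head?_cons, Option.mem_some_iff] at hK hK'
              subst hK; subst hK'
              rfl
            · intro E hE hEA hEB
              rcases key E hE hEA hEB with rfl | ⟨t, h1, rfl, h2, h3, h4⟩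
              · exact ldiv_nil_left hDn
              · exact (ldiv_iff (by exact ⟨by simpa using h2, List.isChain_singleton _⟩) hDn).2
                  (Or.inr ⟨[], [], I.1.1, t, m, h1, hm1, rfl, rfl, hm4 t h1 h3 h4⟩)
      · -- different starts
        have key : ∀ E, Nrm E → LDiv E (I :: A₁) → LDiv E (J :: B₁) → E = [] := by
          intro E hE hEA hEB
          rcases (ldiv_iff hE hA).1 hEA with rfl | ⟨E₀, A₂, w', v', y', hwv', hwy', hEeq, hAeq, hvy'⟩
          · rfl
          rcases (ldiv_iff hE hB).1 hEB with habs | ⟨F₀, B₂, w₂, v₂, y₂, hwv₂, hwy₂, hFeq, hBeq, hvy₂⟩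
          · rw [habs] at hEeq
            exact absurd hEeq.symm (by simp)
          exfalso
          obtain ⟨hE₀F₀, hlast⟩ := concat_inj (hEeq.symm.trans hFeq)
          subst hE₀F₀
          rcases E₀ with _ | ⟨K, E₀₁⟩
          · simp only [List.nil_append, List.cons.injEq] at hAeq hBeq
            have hw1 : I.1.1 = w' := by rw [hAeq.1]
            have hw2 : J.1.1 = w₂ := by rw [hBeq.1]
            have : w' = w₂ := congrArg (fun K : Iv P => K.1.1) hlast
            exact hw (hw1.trans (this.trans hw2.symm))
          · simp only [List.cons_append, List.cons.injEq] at hAeq hBeq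
            exact hw (congrArg (fun K : Iv P => K.1.1) (hAeq.1.trans hBeq.1.symm))
        refine ⟨[], Nrm_nil, ldiv_nil_left hA, ldiv_nil_left hB, by simp, ?_⟩
        intro E hE hEA hEB
        rw [key E hE hEA hEB]
        exact ldiv_refl Nrm_nil

theorem ldiv_singleton_iff {E : List (Iv P)} (hE : Nrm E) {x aa : P} (h : x ≤ aa)
    (hxa : x ≠ aa) :
    LDiv E [⟨(x, aa), h⟩] ↔ E = [] ∨ ∃ (t : P) (ht : x ≤ t), t ≤ aa ∧ E = [⟨(x, t), ht⟩] := by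
  have hA : Nrm [⟨(x, aa), h⟩] := ⟨by simpa using hxa, List.isChain_singleton _⟩
  constructor
  · intro hd
    rcases (ldiv_iff hE hA).1 hd with rfl | ⟨D₀, A₁, w, v, y, hwv, hwy, hEeq, hAeq, hvy⟩
    · exact Or.inl rfl
    · rcases D₀ with _ | ⟨K, D₁⟩
      · simp only [List.nil_append, List.cons.injEq] at hAeq
        have hw1 : w = x := (congrArg (fun K : Iv P => K.1.1) hAeq.1).symm
        have hy1 : y = aa := (congrArg (fun K : Iv P => K.1.2) hAeq.1).symm
        subst hw1; subst hy1
        exact Or.inr ⟨v, hwv, hvy, hEeq⟩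
      · exfalso
        have := congrArg List.length hAeq
        simp at this
  · rintro (rfl | ⟨t, ht, hta, rfl⟩)
    · exact ldiv_nil_left hA
    · exact (ldiv_iff hE hA).2 (Or.inr ⟨[], [], x, t, aa, ht, h, rfl, rfl, hta⟩)

theorem meet_of_lgcd (hg : LGcdCond P) : MeetCond P := by
  intro x a b hxa hxb
  by_cases hax : x = a
  · exact ⟨x, le_refl x, hxa, hxb, fun c _ hca _ => hax ▸ hca⟩
  · by_cases hbx : x = b
    · exact ⟨x, le_refl x, hxa, hxb, fun c _ _ hcb => hbx ▸ hcb⟩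
    · have hAn : Nrm [⟨(x, a), hxa⟩] := ⟨by simpa using hax, List.isChain_singleton _⟩
      have hBn : Nrm [⟨(x, b), hxb⟩] := ⟨by simpa using hbx, List.isChain_singleton _⟩
      obtain ⟨D, hD, hDA, hDB, hDuniv⟩ := hg _ _ hAn hBn
      rcases (ldiv_singleton_iff hD hxa hax).1 hDA with rfl | ⟨t, ht, hta, rfl⟩
      · refine ⟨x, le_refl x, hxa, hxb, ?_⟩
        intro c hxc hca hcb
        by_cases hcx : x = c
        · exact hcx.ge
        · exfalso
          have hEn : Nrm [⟨(x, c), hxc⟩] := ⟨by simpa using hcx, List.isChain_singleton _⟩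
          have h1 : LDiv [⟨(x, c), hxc⟩] [⟨(x, a), hxa⟩] :=
            (ldiv_singleton_iff hEn hxa hax).2 (Or.inr ⟨c, hxc, hca, rfl⟩)
          have h2 : LDiv [⟨(x, c), hxc⟩] [⟨(x, b), hxb⟩] :=
            (ldiv_singleton_iff hEn hxb hbx).2 (Or.inr ⟨c, hxc, hcb, rfl⟩)
          have := ldiv_nil hEn (hDuniv _ hEn h1 h2)
          simp at this
      · -- D = [⟨(x,t)⟩]
        have htb : t ≤ b := by
          have hxt : x ≠ t := fun hc => hD.1 ⟨(x, t), ht⟩ (by simp) (by simpa using hc)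
          rcases (ldiv_singleton_iff hD hxb hbx).1 hDB with habs | ⟨t', ht', htb', heq⟩
          · exact absurd habs (by simp)
          · have : t = t' := by
              have := List.cons.injEq _ _ _ _ ▸ heq
              have h1 := (congrArg (fun K : Iv P => K.1.2) this.1)
              exact h1
            exact this ▸ htb'
        refine ⟨t, ht, hta, htb, ?_⟩
        intro c hxc hca hcb
        by_cases hcx : x = c
        · exact hcx ▸ ht
        · have hEn : Nrm [⟨(x, c), hxc⟩] := ⟨by simpa using hcx, List.isChain_singleton _⟩
          have h1 : LDiv [⟨(x, c), hxc⟩] [⟨(x, a), hxa⟩] :=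
            (ldiv_singleton_iff hEn hxa hax).2 (Or.inr ⟨c, hxc, hca, rfl⟩)
          have h2 : LDiv [⟨(x, c), hxc⟩] [⟨(x, b), hxb⟩] :=
            (ldiv_singleton_iff hEn hxb hbx).2 (Or.inr ⟨c, hxc, hcb, rfl⟩)
          have h3 := hDuniv _ hEn h1 h2
          have hxt : x ≠ t := fun hc => hD.1 ⟨(x, t), ht⟩ (by simp) (by simpa using hc)
          rcases (ldiv_singleton_iff hEn ht hxt).1 h3 with habs | ⟨t', ht', htt', heq⟩
          · exact absurd habs (by simp)
          · have : c = t' := by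
              have := List.cons.injEq _ _ _ _ ▸ heq
              exact congrArg (fun K : Iv P => K.1.2) this.1
            exact this ▸ htt'

theorem hasLeftGcds_iff_lgcdCond : HasLeftGcds (IntervalMonoid P) ↔ LGcdCond P := by
  constructor
  · intro h A B hA hB
    obtain ⟨d, hda, hdb, huniv⟩ := h (IvProd A) (IvProd B)
    refine ⟨nf d, Nrm.nf d, ?_, ?_, ?_⟩
    · have := (ldvd_iff_ldiv d (IvProd A)).1 hda
      rwa [nf_IvProd hA] at this
    · have := (ldvd_iff_ldiv d (IvProd B)).1 hdb
      rwa [nf_IvProd hB] at this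
    · intro E hE hEA hEB
      have h1 : LDvd (IvProd E) (IvProd A) := by
        rw [ldvd_iff_ldiv, nf_IvProd hE, nf_IvProd hA]
        exact hEA
      have h2 : LDvd (IvProd E) (IvProd B) := by
        rw [ldvd_iff_ldiv, nf_IvProd hE, nf_IvProd hB]
        exact hEB
      have := (ldvd_iff_ldiv _ _).1 (huniv _ h1 h2)
      rwa [nf_IvProd hE] at this
  · intro h a b
    obtain ⟨D, hD, hDA, hDB, huniv⟩ := h (nf a) (nf b) (Nrm.nf a) (Nrm.nf b)
    refine ⟨IvProd D, ?_, ?_, ?_⟩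
    · rw [ldvd_iff_ldiv, nf_IvProd hD]
      exact hDA
    · rw [ldvd_iff_ldiv, nf_IvProd hD]
      exact hDB
    · intro e hea heb
      rw [ldvd_iff_ldiv, nf_IvProd hD]
      exact huniv (nf e) (Nrm.nf e) ((ldvd_iff_ldiv e a).1 hea) ((ldvd_iff_ldiv e b).1 heb)

def RGcdCond (P : Type*) [PartialOrder P] : Prop :=
  ∀ A B : List (Iv P), Nrm A → Nrm B → ∃ D, Nrm D ∧ RDiv D A ∧ RDiv D B ∧
    ∀ E, Nrm E → RDiv E A → RDiv E B → RDiv E D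

theorem rgcdCond_iff_lgcdCond_dual : RGcdCond P ↔ LGcdCond Pᵒᵈ := by
  constructor
  · intro h A' B' hA' hB'
    obtain ⟨D, hD, hDA, hDB, huniv⟩ := h (lver A') (lver B') hA'.lver hB'.lver
    refine ⟨lrev D, hD.lrev, ?_, ?_, ?_⟩
    · have := (rdiv_iff_ldiv hD hA'.lver).1 hDA
      rwa [lrev_lver] at this
    · have := (rdiv_iff_ldiv hD hB'.lver).1 hDB
      rwa [lrev_lver] at this
    · intro E' hE' hEA hEB
      have h1 : RDiv (lver E') (lver A') := by
        rw [rdiv_iff_ldiv hE'.lver hA'.lver, lrev_lver, lrev_lver]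
        exact hEA
      have h2 : RDiv (lver E') (lver B') := by
        rw [rdiv_iff_ldiv hE'.lver hB'.lver, lrev_lver, lrev_lver]
        exact hEB
      have := (rdiv_iff_ldiv hE'.lver hD).1 (huniv _ hE'.lver h1 h2)
      rwa [lrev_lver] at this
  · intro h A B hA hB
    obtain ⟨D', hD', hDA, hDB, huniv⟩ := h (lrev A) (lrev B) hA.lrev hB.lrev
    refine ⟨lver D', hD'.lver, ?_, ?_, ?_⟩
    · rw [rdiv_iff_ldiv hD'.lver hA, lrev_lver]
      exact hDA
    · rw [rdiv_iff_ldiv hD'.lver hB, lrev_lver]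
      exact hDB
    · intro E hE hEA hEB
      rw [rdiv_iff_ldiv hE hD'.lver, lrev_lver]
      exact huniv (lrev E) hE.lrev ((rdiv_iff_ldiv hE hA).1 hEA) ((rdiv_iff_ldiv hE hB).1 hEB)

theorem hasRightGcds_iff_rgcdCond : HasRightGcds (IntervalMonoid P) ↔ RGcdCond P := by
  constructor
  · intro h A B hA hB
    obtain ⟨d, hda, hdb, huniv⟩ := h (IvProd A) (IvProd B)
    refine ⟨nf d, Nrm.nf d, ?_, ?_, ?_⟩
    · have := (rdvd_iff_rdiv d (IvProd A)).1 hda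
      rwa [nf_IvProd hA] at this
    · have := (rdvd_iff_rdiv d (IvProd B)).1 hdb
      rwa [nf_IvProd hB] at this
    · intro E hE hEA hEB
      have h1 : RDvd (IvProd E) (IvProd A) := by
        rw [rdvd_iff_rdiv, nf_IvProd hE, nf_IvProd hA]
        exact hEA
      have h2 : RDvd (IvProd E) (IvProd B) := by
        rw [rdvd_iff_rdiv, nf_IvProd hE, nf_IvProd hB]
        exact hEB
      have := (rdvd_iff_rdiv _ _).1 (huniv _ h1 h2)
      rwa [nf_IvProd hE] at this
  · intro h a b
    obtain ⟨D, hD, hDA, hDB, huniv⟩ := h (nf a) (nf b) (Nrm.nf a) (Nrm.nf b)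
    refine ⟨IvProd D, ?_, ?_, ?_⟩
    · rw [rdvd_iff_rdiv, nf_IvProd hD]
      exact hDA
    · rw [rdvd_iff_rdiv, nf_IvProd hD]
      exact hDB
    · intro e hea heb
      rw [rdvd_iff_rdiv, nf_IvProd hD]
      exact huniv (nf e) (Nrm.nf e) ((rdvd_iff_rdiv e a).1 hea) ((rdvd_iff_rdiv e b).1 heb)

theorem meetCond_dual_iff :
    MeetCond Pᵒᵈ ↔ (∀ x a b : P, a ≤ x → b ≤ x →
      ∃ m, m ≤ x ∧ a ≤ m ∧ b ≤ m ∧ ∀ c, c ≤ x → a ≤ c → b ≤ c → m ≤ c) := by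
  constructor
  · intro h x a b hax hbx
    obtain ⟨m, h1, h2, h3, h4⟩ := h (OrderDual.toDual x) (OrderDual.toDual a)
      (OrderDual.toDual b) hax hbx
    exact ⟨OrderDual.ofDual m, h1, h2, h3, fun c hc ha hb => h4 (OrderDual.toDual c) hc ha hb⟩
  · intro h x a b hax hbx
    obtain ⟨m, h1, h2, h3, h4⟩ := h (OrderDual.ofDual x) (OrderDual.ofDual a)
      (OrderDual.ofDual b) hax hbx
    exact ⟨OrderDual.toDual m, h1, h2, h3, fun c hc ha hb => h4 (OrderDual.ofDual c) hc ha hb⟩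

theorem lgcd_of_meet (hm : MeetCond P) : LGcdCond P := by
  intro A B hA hB
  obtain ⟨D, hD, h1, h2, _, h3⟩ := lgcd_aux hm A B hA hB
  exact ⟨D, hD, h1, h2, h3⟩

end IvNF

/-- The interval monoid of `P` is a gcd-monoid if and only if `P` is a local lattice. -/
theorem intervalMonoid_gcdMonoid_iff_localLattice (P : Type*) [PartialOrder P] :
    GcdMonoidProp (IntervalMonoid P) ↔ LocalLattice P := by
  constructor
  · rintro ⟨_, _, hL, hR⟩
    constructor
    · exact IvNF.meet_of_lgcd (IvNF.hasLeftGcds_iff_lgcdCond.1 hL)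
    · exact IvNF.meetCond_dual_iff.1
        (IvNF.meet_of_lgcd (IvNF.rgcdCond_iff_lgcdCond_dual.1
          (IvNF.hasRightGcds_iff_rgcdCond.1 hR)))
  · rintro ⟨hmeet, hjoin⟩
    refine ⟨IvNF.cancellative_intervalMonoid, IvNF.trivialUnits_intervalMonoid, ?_, ?_⟩
    · exact IvNF.hasLeftGcds_iff_lgcdCond.2 (IvNF.lgcd_of_meet hmeet)
    · exact IvNF.hasRightGcds_iff_rgcdCond.2
        (IvNF.rgcdCond_iff_lgcdCond_dual.2
          (IvNF.lgcd_of_meet (IvNF.meetCond_dual_iff.2 hjoin)))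
end
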